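/- arXiv:1710.04388 — 3 statements merged into one kernel-verified Lean document; each statement's English description precedes it below -/
import Mathlib

section
/- Let f : ℕ_{≥2} → ℕ be a map with finite support that is not identically zero. Then there exists a finitely generated additive submonoid H ⊆ ℚ_{≥0} with ℕ ⊆ H such that every atom of H is strictly less than 1, the element 1 ∈ H is squarefree in H, and for every integer k ≥ 2 the number of factorizations of 1 in H of length k equals f(k). -/
/-- `u` is an atom of the additive submonoid `H` of `ℚ`: it is a nonzero element of `H`
that is not the sum of two nonzero elements of `H`. -/
def IsAtomOf (H : AddSubmonoid ℚ) (u : ℚ) : Prop :=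
  u ∈ H ∧ u ≠ 0 ∧ ∀ v ∈ H, ∀ w ∈ H, v ≠ 0 → w ≠ 0 → u ≠ v + w

/-- `z` is a factorization of `a` in `H`: a multiset of atoms of `H` with sum `a`. -/
def IsFactorizationOf (H : AddSubmonoid ℚ) (a : ℚ) (z : Multiset ℚ) : Prop :=
  (∀ x ∈ z, IsAtomOf H x) ∧ z.sum = a

namespace S9

def dd (k i : ℕ) : ℕ := (k+1)^i + if i = k-1 then 1 else 0
def T (k : ℕ) : ℕ := ∑ i ∈ Finset.range k, dd k i
def MM (k p : ℕ) : ℕ := (p - T k) / k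
def cc (k p i : ℕ) : ℕ := MM k p + dd k i
def Good (k p : ℕ) : Prop := 2 ≤ k ∧ p.Prime ∧ p ≡ 1 [MOD k] ∧ (k+1)^(k+2) < p

lemma geo (k n : ℕ) : (∑ i ∈ Finset.range n, (k+1)^i) * k + 1 = (k+1)^n := by
  induction n with
  | zero => simp
  | succ n ih => rw [Finset.sum_range_succ, add_mul, pow_succ, ← ih]; ring

lemma T_eq (k : ℕ) (hk : 1 ≤ k) : T k = (∑ i ∈ Finset.range k, (k+1)^i) + 1 := by
  unfold T dd
  rw [Finset.sum_add_distrib, Finset.sum_ite_eq' (Finset.range k) (k-1) (fun _ => 1)]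
  rw [if_pos (Finset.mem_range.2 (by omega))]

lemma T_le (k : ℕ) (hk : 1 ≤ k) : T k ≤ (k+1)^k := by
  have h := geo k k
  have h2 : (∑ i ∈ Finset.range k, (k+1)^i) ≤ (∑ i ∈ Finset.range k, (k+1)^i) * k :=
    Nat.le_mul_of_pos_right _ (by omega)
  rw [T_eq k hk]; omega

lemma sum_modeq (k : ℕ) : ∀ n : ℕ, (∑ i ∈ Finset.range n, (k+1)^i) ≡ n [MOD k] := by
  intro n
  induction n with
  | zero => simp [Nat.ModEq.refl]
  | succ n ih =>
      rw [Finset.sum_range_succ]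
      have h1 : (k+1) ≡ 1 [MOD k] := Nat.add_mod_left k 1
      have h2 := Nat.ModEq.pow n h1
      rw [one_pow] at h2
      exact ih.add h2

lemma T_modeq (k : ℕ) (hk : 1 ≤ k) : T k ≡ 1 [MOD k] := by
  rw [T_eq k hk]
  have h := sum_modeq k k
  have : (k : ℕ) ≡ 0 [MOD k] := (Nat.modEq_zero_iff_dvd).2 dvd_rfl
  simpa using (h.trans this).add_right 1

lemma key_p {k p : ℕ} (hG : Good k p) : k * MM k p + T k = p := by
  obtain ⟨hk, hp, hmod, hlt⟩ := hG
  have hT : T k ≤ p := by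
    have := T_le k (by omega)
    have h2 : (k+1)^k ≤ (k+1)^(k+2) := Nat.pow_le_pow_right (by omega) (by omega)
    omega
  have : k ∣ p - T k := by
    have := (T_modeq k (by omega)).trans hmod.symm
    exact (Nat.modEq_iff_dvd' hT).1 this
  unfold MM
  rw [Nat.mul_div_cancel' this]
  omega

lemma M_lb {k p : ℕ} (hG : Good k p) : (k+1)^k + k + 1 ≤ MM k p := by
  have hkey := key_p hG
  obtain ⟨hk, hp, hmod, hlt⟩ := hG
  have hT := T_le k (by omega)
  -- p - T ≥ (k+1)^(k+2) - (k+1)^k ≥ k * ((k+1)^k + k + 1)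
  have h1 : (k+1)^(k+2) = (k+1)^k * (k+1) * (k+1) := by ring
  have h2 : k * ((k+1)^k + k + 1) + (k+1)^k ≤ (k+1)^(k+2) := by
    rw [h1]
    have hP : 1 ≤ (k+1)^k := Nat.one_le_pow _ _ (by omega)
    calc k * ((k+1)^k + k + 1) + (k+1)^k = (k+1)^k*(k+1) + (k+1)*k := by ring
      _ ≤ (k+1)^k*(k+1) + ((k+1)^k*(k+1))*k := by
          have : (k+1) ≤ (k+1)^k*(k+1) := Nat.le_mul_of_pos_left _ hP
          exact Nat.add_le_add_left (Nat.mul_le_mul_right _ this) _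
      _ = (k+1)^k * (k+1) * (k+1) := by ring
  have : k * ((k+1)^k + k + 1) ≤ k * MM k p := by omega
  exact Nat.le_of_mul_le_mul_left this (by omega)

end S9

namespace S9

lemma dd_lb (k i : ℕ) : 1 ≤ dd k i := by
  unfold dd
  have : 1 ≤ (k+1)^i := Nat.one_le_pow _ _ (by omega)
  split <;> omega

lemma dd_ub {k : ℕ} {i : ℕ} (hi : i < k) : dd k i ≤ (k+1)^(k-1) + 1 := by
  unfold dd
  have : (k+1)^i ≤ (k+1)^(k-1) := Nat.pow_le_pow_right (by omega) (by omega)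
  split <;> omega

lemma dd_mono {k i j : ℕ} (hij : i < j) (hj : j < k) : dd k i < dd k j := by
  unfold dd
  have h1 : (k+1)^i < (k+1)^j := Nat.pow_lt_pow_right (by omega) hij
  rw [if_neg (show ¬ i = k-1 by omega)]
  split <;> omega

variable {k p : ℕ}

lemma M_lb' (hG : Good k p) : (k+1)^(k-1) + 1 < MM k p := by
  have h := M_lb hG
  have hk := hG.1
  have : (k+1)^(k-1) ≤ (k+1)^k := Nat.pow_le_pow_right (by omega) (by omega)
  omega

lemma cc_pos (hG : Good k p) (i : ℕ) : 0 < cc k p i := by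
  have := M_lb hG; unfold cc; omega

lemma interval_hi (hG : Good k p) {i : ℕ} (hi : i < k) : p < (k+1) * cc k p i := by
  have hkey := key_p hG
  have hM := M_lb hG
  have hT := T_le k (by have := hG.1; omega)
  have hd := dd_lb k i
  unfold cc
  have hk := hG.1
  nlinarith

lemma interval_lo (hG : Good k p) {i : ℕ} (hi : i < k) : (k-1) * cc k p i < p := by
  have hkey := key_p hG
  have hM := M_lb hG
  have hd := dd_ub hi
  have hk := hG.1
  have hp1 : (k-1) * (k+1)^(k-1) ≤ (k+1)^k := by
    calc (k-1) * (k+1)^(k-1) ≤ (k+1) * (k+1)^(k-1) := Nat.mul_le_mul_right _ (by omega)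
      _ = (k+1)^k := by rw [← pow_succ']; congr 1; omega
  have hdd : (k-1) * dd k i ≤ (k+1)^k + k - 1 := by
    calc (k-1) * dd k i ≤ (k-1) * ((k+1)^(k-1) + 1) := Nat.mul_le_mul_left _ hd
      _ = (k-1) * (k+1)^(k-1) + (k-1) := by ring
      _ ≤ (k+1)^k + k - 1 := by omega
  -- (k-1) * cc = (k-1)*M + (k-1)*dd < (k-1)*M + M + T ≤ k*M + T = p
  have hTpos : 1 ≤ T k := by
    have := dd_lb k 0
    calc 1 ≤ dd k 0 := this
      _ ≤ T k := Finset.single_le_sum (f := fun i => dd k i) (by intros; omega)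
          (Finset.mem_range.2 (by omega))
  unfold cc
  have expand : (k-1) * (MM k p + dd k i) = (k-1) * MM k p + (k-1) * dd k i := by ring
  rw [expand]
  have hlt : (k-1) * dd k i < MM k p + T k := by omega
  have : (k-1) * MM k p + MM k p = k * MM k p := by
    have : k - 1 + 1 = k := by omega
    calc (k-1) * MM k p + MM k p = (k-1+1) * MM k p := by ring
      _ = k * MM k p := by rw [this]
  omega

lemma cc_lt_p (hG : Good k p) {i : ℕ} (hi : i < k) : cc k p i < p := by
  have := interval_lo hG hi
  have hk := hG.1
  have h2 : cc k p i ≤ (k-1) * cc k p i := Nat.le_mul_of_pos_left _ (by omega)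
  omega

lemma cc_mono (hG : Good k p) {i j : ℕ} (hij : i < j) (hj : j < k) :
    cc k p i < cc k p j := by
  have := dd_mono hij hj; unfold cc; omega

lemma sum_cc (hG : Good k p) : ∑ i ∈ Finset.range k, cc k p i = p := by
  unfold cc
  rw [Finset.sum_add_distrib, Finset.sum_const, Finset.card_range, smul_eq_mul]
  exact key_p hG

lemma cc_lt_twoM (hG : Good k p) {i : ℕ} (hi : i < k) : cc k p i < 2 * MM k p := by
  have := dd_ub hi
  have := M_lb' hG
  unfold cc; omega

lemma cancel_digit {K a b X Y : ℕ} (ha : a ≤ K) (hb : b ≤ K)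
    (heq : (K+1)*X + a = (K+1)*Y + b) : a = b ∧ X = Y := by
  rcases le_or_gt X Y with h | h
  · obtain ⟨D, hD⟩ := Nat.exists_eq_add_of_le h
    rw [hD, mul_add] at heq
    rcases Nat.eq_zero_or_pos D with h0 | h0
    · subst h0; constructor <;> omega
    · have : K + 1 ≤ (K+1) * D := Nat.le_mul_of_pos_right _ h0
      omega
  · obtain ⟨D, hD⟩ := Nat.exists_eq_add_of_le h.le
    rw [hD, mul_add] at heq
    have hD0 : 0 < D := by omega
    have : K + 1 ≤ (K+1) * D := Nat.le_mul_of_pos_right _ hD0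
    omega

/-- base-(k+1) digit uniqueness -/
lemma digits (k : ℕ) (hk : 1 ≤ k) : ∀ (m : ℕ) (n : ℕ → ℕ), (∀ i < m, n i ≤ k) →
    (∑ i ∈ Finset.range m, n i * (k+1)^i) = (∑ i ∈ Finset.range m, (k+1)^i) →
    ∀ i < m, n i = 1 := by
  intro m
  induction m with
  | zero => intro n _ _ i hi; omega
  | succ m ih =>
    intro n hn heq i hi
    rw [Finset.sum_range_succ', Finset.sum_range_succ'] at heq
    simp only [pow_succ', pow_zero, mul_one, one_mul] at heq
    have hX : ∑ j ∈ Finset.range m, n (j+1) * ((k+1) * (k+1)^j)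
        = (k+1) * ∑ j ∈ Finset.range m, n (j+1) * (k+1)^j := by
      rw [Finset.mul_sum]; apply Finset.sum_congr rfl; intros; ring
    have hY : ∑ j ∈ Finset.range m, (k+1) * (k+1)^j
        = (k+1) * ∑ j ∈ Finset.range m, (k+1)^j := by
      rw [Finset.mul_sum]
    rw [hX, hY] at heq
    have hkey := cancel_digit (hn 0 (by omega)) hk heq
    rcases Nat.eq_zero_or_pos i with rfl | hipos
    · exact hkey.1
    · obtain ⟨j, rfl⟩ : ∃ j, i = j + 1 := ⟨i - 1, by omega⟩
      exact ih (fun j => n (j+1)) (fun j hj => hn _ (by omega)) hkey.2 j (by omega)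

/-- block uniqueness: the only ℕ-combination of the `cc` summing to `p` is all-ones. -/
lemma block_unique (hG : Good k p) (n : ℕ → ℕ)
    (hsum : ∑ i ∈ Finset.range k, n i * cc k p i = p) :
    (∀ i < k, n i = 1) ∧ ∑ i ∈ Finset.range k, n i = k := by
  have hk := hG.1
  have hp : 0 < p := hG.2.1.pos
  set s := ∑ i ∈ Finset.range k, n i with hs
  have hup : s * (p+1) ≤ (k+1) * p := by
    calc s * (p+1) = ∑ i ∈ Finset.range k, n i * (p+1) := by rw [Finset.sum_mul]
      _ ≤ ∑ i ∈ Finset.range k, n i * ((k+1) * cc k p i) := by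
          apply Finset.sum_le_sum; intro i hi
          exact Nat.mul_le_mul_left _ (interval_hi hG (Finset.mem_range.1 hi))
      _ = (k+1) * ∑ i ∈ Finset.range k, n i * cc k p i := by
          rw [Finset.mul_sum]; apply Finset.sum_congr rfl; intros; ring
      _ = (k+1) * p := by rw [hsum]
  have hlo : (k-1) * p ≤ s * (p-1) := by
    calc (k-1) * p = (k-1) * ∑ i ∈ Finset.range k, n i * cc k p i := by rw [hsum]
      _ = ∑ i ∈ Finset.range k, n i * ((k-1) * cc k p i) := by
          rw [Finset.mul_sum]; apply Finset.sum_congr rfl; intros; ring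
      _ ≤ ∑ i ∈ Finset.range k, n i * (p-1) := by
          apply Finset.sum_le_sum; intro i hi
          have := interval_lo hG (Finset.mem_range.1 hi)
          exact Nat.mul_le_mul_left _ (by omega)
      _ = s * (p-1) := by rw [← Finset.sum_mul]
  have hsk : s = k := by
    have h1 : k ≤ s := by
      by_contra h
      push_neg at h
      have h2 : s * (p-1) ≤ (k-1) * (p-1) := Nat.mul_le_mul_right _ (by omega)
      have h3 : (k-1) * (p-1) + (k-1) * 1 = (k-1) * p := by
        rw [← Nat.mul_add]; congr 1; omega
      omega
    have h2 : s ≤ k := by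
      by_contra h
      push_neg at h
      have h2 : (k+1) * (p+1) ≤ s * (p+1) := Nat.mul_le_mul_right _ (by omega)
      have h3 : (k+1) * (p+1) = (k+1) * p + (k+1) * 1 := by rw [← Nat.mul_add]
      omega
    omega
  have hnle : ∀ i < k, n i ≤ k := by
    intro i hi
    have h : n i ≤ ∑ j ∈ Finset.range k, n j :=
      Finset.single_le_sum (f := fun j => n j) (fun _ _ => Nat.zero_le _)
        (Finset.mem_range.2 hi)
    omega
  -- reduce to dd equation
  have expand : ∑ i ∈ Finset.range k, n i * cc k p i
      = s * MM k p + ∑ i ∈ Finset.range k, n i * dd k i := by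
    unfold cc
    rw [hs, Finset.sum_mul]
    rw [← Finset.sum_add_distrib]
    apply Finset.sum_congr rfl; intros; ring
  have hdd : ∑ i ∈ Finset.range k, n i * dd k i = T k := by
    have hkp := key_p hG
    rw [expand, hsk] at hsum
    omega
  -- peel the top index
  obtain ⟨m, rfl⟩ : ∃ m, k = m + 1 := ⟨k - 1, by omega⟩
  rw [Finset.sum_range_succ] at hdd
  rw [T_eq _ (by omega), Finset.sum_range_succ] at hdd
  have hddtop : dd (m+1) m = (m+2)^m + 1 := by
    unfold dd; rw [if_pos (by omega)]
  have hsmall : ∀ i ∈ Finset.range m, dd (m+1) i = (m+2)^i := by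
    intro i hi
    have hi' := Finset.mem_range.1 hi
    unfold dd; rw [if_neg (by omega)]; norm_num
  have hsm : ∑ i ∈ Finset.range m, n i * dd (m+1) i
      = ∑ i ∈ Finset.range m, n i * (m+2)^i :=
    Finset.sum_congr rfl (fun i hi => by rw [hsmall i hi])
  rw [hsm, hddtop] at hdd
  simp only [show m+1+1 = m+2 from rfl] at hdd
  set A := ∑ i ∈ Finset.range m, n i * (m+2)^i with hA
  set B := ∑ i ∈ Finset.range m, (m+2)^i with hB
  have hgeo : B * (m+1) + 1 = (m+2)^m := by
    have := geo (m+1) m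
    simpa using this
  have hABle : A ≤ B * (m+1) := by
    rw [hB, hA, Finset.sum_mul]
    apply Finset.sum_le_sum
    intro i hi
    have := hnle i (by have := Finset.mem_range.1 hi; omega)
    calc n i * (m+2)^i ≤ (m+1) * (m+2)^i := Nat.mul_le_mul_right _ this
      _ = (m+2)^i * (m+1) := by ring
  have hBle : B ≤ B * (m+1) := Nat.le_mul_of_pos_right _ (by omega)
  have hnm : n m = 0 ∨ n m = 1 ∨ 2 ≤ n m := by omega
  have hQ : 0 < (m+2)^m := Nat.pow_pos (by omega)
  rcases hnm with h0 | h1 | h2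
  · rw [h0] at hdd; omega
  · rw [h1, one_mul] at hdd
    have hABeq : A = B := by omega
    have hds := digits (m+1) (by omega) m n (fun i hi => hnle i (by omega)) (by
      simp only [show m+1+1 = m+2 from rfl]
      exact hABeq)
    constructor
    · intro i hi
      rcases Nat.lt_or_ge i m with h | h
      · exact hds i h
      · have : i = m := by omega
        rw [this]; exact h1
    · exact hsk
  · have h2Q : 2 * ((m+2)^m + 1) ≤ n m * ((m+2)^m + 1) := Nat.mul_le_mul_right _ h2
    omega

end S9

namespace S9

def gg (k p : ℕ) (i : ℕ) : ℚ := (cc k p i : ℚ) / p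
def gen (k p : ℕ) : Set ℚ := {x | ∃ i < k, x = gg k p i}
def Z (k p : ℕ) : Multiset ℚ := (Multiset.range k).map (gg k p)

variable {k p : ℕ}

lemma gen_pos (hG : Good k p) {x : ℚ} (hx : x ∈ gen k p) : 0 < x ∧ x < 1 := by
  obtain ⟨i, hi, rfl⟩ := hx
  have hppos : 0 < p := hG.2.1.pos
  have hppos' : (0:ℚ) < (p:ℚ) := by exact_mod_cast hppos
  have h1 := cc_pos hG i
  have h2 := cc_lt_p hG hi
  unfold gg
  constructor
  · apply div_pos (by exact_mod_cast h1) hppos'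
  · rw [div_lt_one hppos']
    exact_mod_cast h2

lemma gg_inj (hG : Good k p) {i j : ℕ} (hi : i < k) (hj : j < k)
    (h : gg k p i = gg k p j) : i = j := by
  have hppos : (0:ℚ) < p := by exact_mod_cast hG.2.1.pos
  unfold gg at h
  rw [div_eq_div_iff (ne_of_gt hppos) (ne_of_gt hppos)] at h
  have hcc : cc k p i = cc k p j := by exact_mod_cast mul_right_cancel₀ (ne_of_gt hppos) h
  by_contra hne
  rcases Nat.lt_or_ge i j with h' | h'
  · exact absurd hcc (Nat.ne_of_lt (cc_mono hG h' hj))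
  · have : j < i := by omega
    exact absurd hcc.symm (Nat.ne_of_lt (cc_mono hG this hi))

lemma count_decomp {α : Type*} [DecidableEq α] (m : Multiset α) (g : ℕ → α) (k : ℕ)
    (hinj : ∀ i < k, ∀ j < k, g i = g j → i = j)
    (hmem : ∀ x ∈ m, ∃ i < k, x = g i) :
    m = ∑ i ∈ Finset.range k, Multiset.replicate (m.count (g i)) (g i) := by
  ext a
  rw [Multiset.count_sum']
  by_cases ha : a ∈ m
  · obtain ⟨i0, hi0, rfl⟩ := hmem a ha
    rw [Finset.sum_eq_single i0]
    · simp [Multiset.count_replicate]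
    · intro j hj hne
      have hcond : g i0 ≠ g j := fun h => hne ((hinj _ hi0 _ (Finset.mem_range.1 hj) h).symm)
      simp only [Multiset.count_replicate]
      rw [if_neg (Ne.symm hcond)]
    · intro h; exact absurd (Finset.mem_range.2 hi0) h
  · rw [Multiset.count_eq_zero_of_notMem ha]
    symm
    apply Finset.sum_eq_zero
    intro j hj
    by_cases h : a = g j
    · subst h; simp only [Multiset.count_replicate, if_pos rfl]
      exact Multiset.count_eq_zero_of_notMem ha
    · simp only [Multiset.count_replicate]
      rw [if_neg (fun hh => h hh.symm)]

lemma msum_of_finsum {α : Type*} [AddCommMonoid α] (s : Finset ℕ) (f : ℕ → Multiset α) :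
    (∑ i ∈ s, f i).sum = ∑ i ∈ s, (f i).sum := by
  classical
  induction s using Finset.induction with
  | empty => simp
  | insert _ _ h ih => rw [Finset.sum_insert h, Finset.sum_insert h, Multiset.sum_add, ih]

lemma mcard_of_finsum {α : Type*} (s : Finset ℕ) (f : ℕ → Multiset α) :
    Multiset.card (∑ i ∈ s, f i) = ∑ i ∈ s, Multiset.card (f i) := by
  classical
  induction s using Finset.induction with
  | empty => simp
  | insert _ _ h ih => rw [Finset.sum_insert h, Finset.sum_insert h, Multiset.card_add, ih]

lemma sum_card_decomp {α : Type*} [DecidableEq α] [AddCommMonoid α] (m : Multiset α)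
    (g : ℕ → α) (k : ℕ)
    (hinj : ∀ i < k, ∀ j < k, g i = g j → i = j)
    (hmem : ∀ x ∈ m, ∃ i < k, x = g i) :
    m.sum = ∑ i ∈ Finset.range k, (m.count (g i)) • (g i) ∧
    Multiset.card m = ∑ i ∈ Finset.range k, m.count (g i) := by
  have hm := count_decomp m g k hinj hmem
  constructor
  · conv_lhs => rw [hm]
    rw [msum_of_finsum]
    exact Finset.sum_congr rfl (fun i _ => Multiset.sum_replicate _ _)
  · conv_lhs => rw [hm]
    rw [mcard_of_finsum]
    exact Finset.sum_congr rfl (fun i _ => Multiset.card_replicate _ _)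

end S9

namespace S9

variable {k p : ℕ}

lemma range_map_eq (k : ℕ) {α : Type*} [DecidableEq α] (g : ℕ → α) :
    ∑ i ∈ Finset.range k, ({g i} : Multiset α) = (Multiset.range k).map g := by
  induction k with
  | zero => simp
  | succ k ih =>
      rw [Finset.sum_range_succ, ih, Multiset.range_succ, Multiset.map_cons,
        add_comm, Multiset.singleton_add]

lemma Z_sum (hG : Good k p) : (Z k p).sum = 1 := by
  have hppos : (0:ℚ) < p := by exact_mod_cast hG.2.1.pos
  have h : (Z k p).sum = ∑ i ∈ Finset.range k, gg k p i := rfl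
  rw [h]
  unfold gg
  rw [← Finset.sum_div]
  rw [div_eq_one_iff_eq (ne_of_gt hppos)]
  rw [← Nat.cast_sum]
  exact_mod_cast congrArg (Nat.cast : ℕ → ℚ) (sum_cc hG)

lemma Z_card : Multiset.card (Z k p) = k := by
  unfold Z; rw [Multiset.card_map, Multiset.card_range]

lemma Z_mem_iff {x : ℚ} : x ∈ Z k p ↔ ∃ i < k, x = gg k p i := by
  unfold Z
  simp only [Multiset.mem_map, Multiset.mem_range]
  constructor
  · rintro ⟨i, hi, rfl⟩; exact ⟨i, hi, rfl⟩
  · rintro ⟨i, hi, rfl⟩; exact ⟨i, hi, rfl⟩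

lemma Z_nodup (hG : Good k p) : (Z k p).Nodup := by
  unfold Z
  apply Multiset.Nodup.map_on _ (Multiset.nodup_range k)
  intro i hi j hj h
  exact gg_inj hG (Multiset.mem_range.1 hi) (Multiset.mem_range.1 hj) h

lemma block_main (hG : Good k p) (m : Multiset ℚ) (hmem : ∀ x ∈ m, x ∈ gen k p)
    (hsum : m.sum = 1) : m = Z k p := by
  classical
  have hppos : (0:ℚ) < p := by exact_mod_cast hG.2.1.pos
  have hinj : ∀ i < k, ∀ j < k, gg k p i = gg k p j → i = j :=
    fun i hi j hj h => gg_inj hG hi hj h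
  obtain ⟨hsum', hcard'⟩ := sum_card_decomp m (gg k p) k hinj hmem
  have h1 : m.sum = (∑ i ∈ Finset.range k, ((m.count (gg k p i) * cc k p i : ℕ) : ℚ)) / p := by
    rw [hsum', Finset.sum_div]
    apply Finset.sum_congr rfl
    intro i _
    rw [nsmul_eq_mul]
    simp only [gg]
    push_cast
    ring
  have h2 : ((∑ i ∈ Finset.range k, m.count (gg k p i) * cc k p i : ℕ) : ℚ) = (p:ℚ) := by
    rw [hsum] at h1
    have h3 := (div_eq_one_iff_eq (ne_of_gt hppos)).1 h1.symm
    rw [← h3, Nat.cast_sum]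
  have hnat : ∑ i ∈ Finset.range k, m.count (gg k p i) * cc k p i = p := by
    exact_mod_cast h2
  obtain ⟨hone, -⟩ := block_unique hG (fun i => m.count (gg k p i)) hnat
  have hm := count_decomp m (gg k p) k hinj hmem
  rw [hm]
  simp only [Z]
  rw [← range_map_eq k (gg k p)]
  apply Finset.sum_congr rfl
  intro i hi
  rw [show m.count (gg k p i) = 1 from hone i (Finset.mem_range.1 hi)]
  simp

end S9

namespace S9

def gens (B : List (ℕ × ℕ)) : Set ℚ := {x | ∃ b ∈ B, x ∈ gen b.1 b.2}

lemma msum_nonneg (m : Multiset ℚ) (h : ∀ x ∈ m, 0 < x) : 0 ≤ m.sum := by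
  induction m using Multiset.induction with
  | empty => simp
  | cons a s ih =>
      rw [Multiset.sum_cons]
      have ha := h a (Multiset.mem_cons_self a s)
      have := ih (fun x hx => h x (Multiset.mem_cons_of_mem hx))
      linarith

lemma msum_pos (m : Multiset ℚ) (h : ∀ x ∈ m, 0 < x) (hne : m ≠ 0) : 0 < m.sum := by
  obtain ⟨a, ha⟩ := Multiset.exists_mem_of_ne_zero hne
  obtain ⟨s, rfl⟩ := Multiset.exists_cons_of_mem ha
  rw [Multiset.sum_cons]
  have := msum_nonneg s (fun x hx => h x (Multiset.mem_cons_of_mem hx))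
  have := h a (Multiset.mem_cons_self a s)
  linarith

lemma msum_zero_iff (m : Multiset ℚ) (h : ∀ x ∈ m, 0 < x) : m.sum = 0 → m = 0 := by
  intro hs
  by_contra hne
  exact absurd hs (ne_of_gt (msum_pos m h hne))

lemma denom_clear (B : List (ℕ × ℕ)) (hB : ∀ b ∈ B, Good b.1 b.2) (m : Multiset ℚ)
    (hm : ∀ x ∈ m, x ∈ gens B) :
    ∃ S : ℕ, m.sum * ((B.map Prod.snd).prod : ℕ) = (S : ℚ) := by
  induction m using Multiset.induction with
  | empty => exact ⟨0, by simp⟩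
  | cons a s ih =>
      obtain ⟨S, hS⟩ := ih (fun x hx => hm x (Multiset.mem_cons_of_mem hx))
      obtain ⟨b, hb, i, hi, ha⟩ := hm a (Multiset.mem_cons_self a s)
      have hpdvd : b.2 ∣ (B.map Prod.snd).prod := List.dvd_prod (List.mem_map_of_mem (f := Prod.snd) hb)
      obtain ⟨t, ht⟩ := hpdvd
      have hppos : (0:ℚ) < (b.2 : ℚ) := by exact_mod_cast (hB b hb).2.1.pos
      refine ⟨cc b.1 b.2 i * t + S, ?_⟩
      rw [Multiset.sum_cons, add_mul, hS, ha]
      simp only [gg]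
      rw [ht]
      push_cast
      field_simp

lemma coprime_prod {p : ℕ} (hp : p.Prime) (l : List ℕ) (hl : ∀ q ∈ l, Nat.Prime q)
    (hnm : p ∉ l) : p.Coprime l.prod := by
  induction l with
  | nil => simp [Nat.coprime_one_right]
  | cons q l ih =>
      rw [List.prod_cons]
      apply Nat.Coprime.mul_right
      · exact (Nat.coprime_primes hp (hl q ((List.mem_cons_self (a := q) (l := l))))).2
          (fun h => hnm (h ▸ (List.mem_cons_self (a := q) (l := l))))
      · exact ih (fun q hq => hl q (List.mem_cons_of_mem _ hq))
          (fun h => hnm (List.mem_cons_of_mem _ h))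

lemma gens_cons {b : ℕ × ℕ} {B : List (ℕ × ℕ)} {x : ℚ} :
    x ∈ gens (b :: B) ↔ x ∈ gen b.1 b.2 ∨ x ∈ gens B := by
  constructor
  · rintro ⟨b', hb', hx⟩
    rcases List.mem_cons.1 hb' with rfl | h
    · exact Or.inl hx
    · exact Or.inr ⟨b', h, hx⟩
  · rintro (h | ⟨b', hb', hx⟩)
    · exact ⟨b, (List.mem_cons_self (a := b) (l := B)), h⟩
    · exact ⟨b', List.mem_cons_of_mem _ hb', hx⟩

lemma key (B : List (ℕ × ℕ)) (hB : ∀ b ∈ B, Good b.1 b.2)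
    (hnd : (B.map Prod.snd).Nodup) (m : Multiset ℚ)
    (hm : ∀ x ∈ m, x ∈ gens B) (hs : m.sum = 1) :
    ∃ b ∈ B, ∀ x ∈ m, x ∈ gen b.1 b.2 := by
  classical
  induction B generalizing m with
  | nil =>
      exfalso
      have : m = 0 := Multiset.eq_zero_of_forall_notMem (fun x hx => by
        obtain ⟨b, hb, -⟩ := hm x hx
        exact absurd hb List.not_mem_nil)
      rw [this] at hs
      simp at hs
  | cons b B' ih =>
      set m₁ := m.filter (· ∈ gen b.1 b.2) with hm₁def
      set m₂ := m.filter (fun x => ¬ (x ∈ gen b.1 b.2)) with hm₂def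
      have hsplit : m₁ + m₂ = m := Multiset.filter_add_not _ m
      have hmem₁ : ∀ x ∈ m₁, x ∈ gen b.1 b.2 := fun x hx => (Multiset.mem_filter.1 hx).2
      have hmem₂ : ∀ x ∈ m₂, x ∈ gens B' := by
        intro x hx
        obtain ⟨hxm, hxn⟩ := Multiset.mem_filter.1 hx
        rcases gens_cons.1 (hm x hxm) with h | h
        · exact absurd h hxn
        · exact h
      have hGb := hB b ((List.mem_cons_self (a := b) (l := B')))
      have hppos : (0:ℚ) < (b.2 : ℚ) := by exact_mod_cast hGb.2.1.pos
      -- numerators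
      have hone : ∀ x ∈ m₁, x ∈ gens [b] := fun x hx => ⟨b, (List.mem_cons_self (a := b) (l := [])), hmem₁ x hx⟩
      obtain ⟨S₁, hS₁⟩ := denom_clear [b] (by
        intro b' hb'
        rcases List.mem_cons.1 hb' with rfl | h
        · exact hGb
        · exact absurd h List.not_mem_nil) m₁ hone
      obtain ⟨S₂, hS₂⟩ := denom_clear B' (fun b' hb' => hB b' (List.mem_cons_of_mem _ hb')) m₂ hmem₂
      simp only [List.map_cons, List.map_nil, List.prod_cons, List.prod_nil, mul_one] at hS₁
      set P' : ℕ := (B'.map Prod.snd).prod with hP'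
      have hP'pos : 0 < P' := by
        rw [hP']
        apply List.prod_pos
        intro q hq
        obtain ⟨b', hb', rfl⟩ := List.mem_map.1 hq
        exact (hB b' (List.mem_cons_of_mem _ hb')).2.1.pos
      have hP'q : (0:ℚ) < (P' : ℚ) := by exact_mod_cast hP'pos
      -- combine over ℚ
      have hsum12 : m₁.sum + m₂.sum = 1 := by rw [← Multiset.sum_add, hsplit, hs]
      have hqeq : (S₁ : ℚ) * P' + S₂ * b.2 = b.2 * P' := by
        have : (m₁.sum + m₂.sum) * (b.2 * P' : ℚ) = b.2 * P' := by rw [hsum12]; ring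
        rw [add_mul] at this
        calc (S₁ : ℚ) * P' + S₂ * b.2
            = (m₁.sum * b.2) * P' + (m₂.sum * P') * b.2 := by rw [hS₁, hS₂]
          _ = m₁.sum * (b.2 * P') + m₂.sum * (b.2 * P') := by ring
          _ = b.2 * P' := this
      have hnat : S₁ * P' + S₂ * b.2 = b.2 * P' := by exact_mod_cast hqeq
      have hpprime := hGb.2.1
      have hpco : Nat.Coprime b.2 P' := by
        apply coprime_prod hpprime
        · intro q hq
          obtain ⟨b', hb', rfl⟩ := List.mem_map.1 hq
          exact (hB b' (List.mem_cons_of_mem _ hb')).2.1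
        · intro h
          rw [List.map_cons] at hnd
          exact (List.nodup_cons.1 hnd).1 h
      have hdvd : b.2 ∣ S₁ * P' := by
        have h1 : b.2 ∣ S₂ * b.2 := Dvd.intro_left _ rfl
        have h2 : b.2 ∣ b.2 * P' := Dvd.intro _ rfl
        have h3 : S₁ * P' = b.2 * P' - S₂ * b.2 := by omega
        rw [h3]; exact Nat.dvd_sub h2 h1
      have hdvd' : b.2 ∣ S₁ := (Nat.Coprime.dvd_of_dvd_mul_right hpco hdvd)
      obtain ⟨a, rfl⟩ := hdvd'
      -- m₁.sum = a
      have hm₁sum : m₁.sum = (a : ℚ) := by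
        have : m₁.sum * b.2 = (a : ℚ) * b.2 := by rw [hS₁]; push_cast; ring
        exact mul_right_cancel₀ (ne_of_gt hppos) this
      have hpos : ∀ x ∈ m, 0 < x := by
        intro x hx
        obtain ⟨b', hb', hxg⟩ := hm x hx
        exact (gen_pos (hB b' hb') hxg).1
      have hpos₁ : ∀ x ∈ m₁, 0 < x := fun x hx => hpos x (Multiset.mem_of_mem_filter hx)
      have hpos₂ : ∀ x ∈ m₂, 0 < x := fun x hx => hpos x (Multiset.mem_of_mem_filter hx)
      have hm₂nonneg : 0 ≤ m₂.sum := msum_nonneg _ hpos₂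
      have hm₁nonneg : 0 ≤ m₁.sum := msum_nonneg _ hpos₁
      have ha1 : a ≤ 1 := by
        have : (a:ℚ) ≤ 1 := by rw [← hm₁sum]; linarith
        exact_mod_cast this
      rcases Nat.le_one_iff_eq_zero_or_eq_one.1 ha1 with rfl | rfl
      · have hm₁0 : m₁ = 0 := msum_zero_iff _ hpos₁ (by rw [hm₁sum]; simp)
        have hmm : m = m₂ := by rw [← hsplit, hm₁0, zero_add]
        have hs₂ : m₂.sum = 1 := by rw [← hmm]; exact hs
        obtain ⟨b', hb', hall⟩ := ih (fun b' hb' => hB b' (List.mem_cons_of_mem _ hb'))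
          (by rw [List.map_cons] at hnd; exact (List.nodup_cons.1 hnd).2) m₂ hmem₂ hs₂
        exact ⟨b', List.mem_cons_of_mem _ hb', fun x hx => hall x (hmm ▸ hx)⟩
      · have hm₂0 : m₂ = 0 := msum_zero_iff _ hpos₂ (by
          have : m₁.sum = 1 := by rw [hm₁sum]; simp
          linarith)
        have hmm : m = m₁ := by rw [← hsplit, hm₂0, add_zero]
        exact ⟨b, (List.mem_cons_self (a := b) (l := B')), fun x hx => hmem₁ x (hmm ▸ hx)⟩

lemma main_struct (B : List (ℕ × ℕ)) (hB : ∀ b ∈ B, Good b.1 b.2)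
    (hnd : (B.map Prod.snd).Nodup) (m : Multiset ℚ)
    (hm : ∀ x ∈ m, x ∈ gens B) (hs : m.sum = 1) :
    ∃ b ∈ B, m = Z b.1 b.2 := by
  obtain ⟨b, hb, hall⟩ := key B hB hnd m hm hs
  exact ⟨b, hb, block_main (hB b hb) m hall hs⟩

end S9

namespace S9

variable {k p : ℕ}

lemma gen_finite (k p : ℕ) : (gen k p).Finite := by
  have h : gen k p ⊆ gg k p '' (Set.Iio k) := by
    rintro x ⟨i, hi, rfl⟩
    exact ⟨i, hi, rfl⟩
  exact Set.Finite.subset ((Set.finite_Iio k).image _) h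

lemma gens_finite (B : List (ℕ × ℕ)) : (gens B).Finite := by
  induction B with
  | nil =>
      have : gens [] = ∅ := by
        ext x; simp [gens]
      rw [this]; exact Set.finite_empty
  | cons b B ih =>
      have : gens (b :: B) = gen b.1 b.2 ∪ gens B := by
        ext x; rw [Set.mem_union]; exact gens_cons
      rw [this]
      exact (gen_finite b.1 b.2).union ih

def HH (B : List (ℕ × ℕ)) : AddSubmonoid ℚ := AddSubmonoid.closure (gens B)

lemma HH_fg (B : List (ℕ × ℕ)) : (HH B).FG :=
  ⟨(gens_finite B).toFinset, by rw [Set.Finite.coe_toFinset]; rfl⟩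

lemma mem_HH_iff {B : List (ℕ × ℕ)} {x : ℚ} :
    x ∈ HH B ↔ ∃ m : Multiset ℚ, (∀ y ∈ m, y ∈ gens B) ∧ m.sum = x := by
  constructor
  · exact fun h => AddSubmonoid.exists_multiset_of_mem_closure h
  · rintro ⟨m, hm, rfl⟩
    apply AddSubmonoid.multiset_sum_mem
    exact fun y hy => AddSubmonoid.subset_closure (hm y hy)

lemma gen_disj {k' p' : ℕ} (hG : Good k p) (hG' : Good k' p') (hne : p ≠ p') {x : ℚ}
    (hx : x ∈ gen k p) (hx' : x ∈ gen k' p') : False := by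
  obtain ⟨i, hi, rfl⟩ := hx
  obtain ⟨j, hj, he⟩ := hx'
  have hp : (0:ℚ) < p := by exact_mod_cast hG.2.1.pos
  have hp' : (0:ℚ) < p' := by exact_mod_cast hG'.2.1.pos
  unfold gg at he
  rw [div_eq_div_iff (ne_of_gt hp) (ne_of_gt hp')] at he
  have hnat : cc k p i * p' = cc k' p' j * p := by exact_mod_cast he
  have hdvd : p ∣ cc k p i * p' := ⟨cc k' p' j, by rw [hnat]; ring⟩
  have hco : Nat.Coprime p p' := (Nat.coprime_primes hG.2.1 hG'.2.1).2 hne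
  have hdvd' : p ∣ cc k p i := hco.dvd_of_dvd_mul_right hdvd
  have h1 := cc_pos hG i
  have h2 := cc_lt_p hG hi
  exact absurd (Nat.le_of_dvd h1 hdvd') (by omega)

section Main

variable {B : List (ℕ × ℕ)} (hB : ∀ b ∈ B, Good b.1 b.2)
  (hnd : (B.map Prod.snd).Nodup)

include hB

lemma HH_nonneg : ∀ x ∈ HH B, 0 ≤ x := by
  intro x hx
  obtain ⟨m, hm, rfl⟩ := mem_HH_iff.1 hx
  apply msum_nonneg
  intro y hy
  obtain ⟨b, hb, hyg⟩ := hm y hy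
  exact (gen_pos (hB b hb) hyg).1

lemma Z_subset_gens {b : ℕ × ℕ} (hb : b ∈ B) : ∀ x ∈ Z b.1 b.2, x ∈ gens B := by
  intro x hx
  obtain ⟨i, hi, rfl⟩ := Z_mem_iff.1 hx
  exact ⟨b, hb, i, hi, rfl⟩

lemma one_mem_HH (hBne : B ≠ []) : (1:ℚ) ∈ HH B := by
  obtain ⟨b, hb⟩ := List.exists_mem_of_ne_nil B hBne
  exact mem_HH_iff.2 ⟨Z b.1 b.2, Z_subset_gens hB hb, Z_sum (hB b hb)⟩

lemma nat_mem_HH (hBne : B ≠ []) (n : ℕ) : (n : ℚ) ∈ HH B := by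
  have h1 := one_mem_HH hB hBne
  have := AddSubmonoid.nsmul_mem (HH B) h1 n
  rwa [nsmul_eq_mul, mul_one] at this

lemma nonzero_rep {v : ℚ} (hv : v ∈ HH B) (hv0 : v ≠ 0) :
    ∃ m : Multiset ℚ, (∀ y ∈ m, y ∈ gens B) ∧ m.sum = v ∧ m ≠ 0 := by
  obtain ⟨m, hm, rfl⟩ := mem_HH_iff.1 hv
  refine ⟨m, hm, rfl, ?_⟩
  rintro rfl
  simp at hv0

lemma atom_mem_gens {u : ℚ} (hu : IsAtomOf (HH B) u) : u ∈ gens B := by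
  obtain ⟨huH, hu0, hatom⟩ := hu
  obtain ⟨m, hm, hsum, hne⟩ := nonzero_rep hB huH hu0
  obtain ⟨x, hx⟩ := Multiset.exists_mem_of_ne_zero hne
  obtain ⟨s, rfl⟩ := Multiset.exists_cons_of_mem hx
  rcases Multiset.empty_or_exists_mem s with rfl | ⟨y, hy⟩
  · rw [Multiset.sum_cons, Multiset.sum_zero, add_zero] at hsum
    rw [← hsum]
    exact hm x (Multiset.mem_cons_self x _)
  · exfalso
    have hxg := hm x (Multiset.mem_cons_self x s)
    have hxH : x ∈ HH B := AddSubmonoid.subset_closure hxg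
    have hsH : s.sum ∈ HH B := mem_HH_iff.2 ⟨s, fun y hy => hm y (Multiset.mem_cons_of_mem hy), rfl⟩
    have hx0 : x ≠ 0 := by
      obtain ⟨b, hb, hxgen⟩ := hxg
      exact ne_of_gt (gen_pos (hB b hb) hxgen).1
    have hs0 : s.sum ≠ 0 := by
      apply ne_of_gt
      apply msum_pos
      · intro z hz
        obtain ⟨b, hb, hzg⟩ := hm z (Multiset.mem_cons_of_mem hz)
        exact (gen_pos (hB b hb) hzg).1
      · rintro rfl
        simp at hy
    exact hatom x hxH s.sum hsH hx0 hs0 (by rw [← hsum, Multiset.sum_cons])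

include hnd

lemma snd_inj {b b' : ℕ × ℕ} (hb : b ∈ B) (hb' : b' ∈ B) (h : b.2 = b'.2) : b = b' :=
  List.inj_on_of_nodup_map hnd hb hb' h

lemma block_eq_of_common {b b' : ℕ × ℕ} (hb : b ∈ B) (hb' : b' ∈ B) {x : ℚ}
    (hx : x ∈ gen b.1 b.2) (hx' : x ∈ gen b'.1 b'.2) : b = b' := by
  by_cases h : b.2 = b'.2
  · exact snd_inj hB hnd hb hb' h
  · exact absurd (gen_disj (hB b hb) (hB b' hb') h hx hx') (fun h => h)

lemma gens_atom {u : ℚ} (hu : u ∈ gens B) : IsAtomOf (HH B) u := by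
  obtain ⟨b, hb, hugen⟩ := hu
  have hGb := hB b hb
  obtain ⟨i, hik, rfl⟩ := hugen
  refine ⟨AddSubmonoid.subset_closure ⟨b, hb, i, hik, rfl⟩, ne_of_gt (gen_pos hGb ⟨i, hik, rfl⟩).1, ?_⟩
  rintro v hv w hw hv0 hw0 huvw
  obtain ⟨mv, hmv, hsv, hnev⟩ := nonzero_rep hB hv hv0
  obtain ⟨mw, hmw, hsw, hnew⟩ := nonzero_rep hB hw hw0
  set x := gg b.1 b.2 i with hxdef
  have hxZ : x ∈ Z b.1 b.2 := Z_mem_iff.2 ⟨i, hik, rfl⟩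
  set R := (Z b.1 b.2).erase x with hRdef
  have hZR : x ::ₘ R = Z b.1 b.2 := Multiset.cons_erase hxZ
  have hRsub : ∀ y ∈ R, y ∈ Z b.1 b.2 := fun y hy => Multiset.mem_of_mem_erase hy
  set m := mv + mw + R with hmdef
  have hmgens : ∀ y ∈ m, y ∈ gens B := by
    intro y hy
    rcases Multiset.mem_add.1 hy with h | h
    · rcases Multiset.mem_add.1 h with h' | h'
      · exact hmv y h'
      · exact hmw y h'
    · exact Z_subset_gens hB hb y (hRsub y h)
  have hmsum : m.sum = 1 := by
    have hZsum := Z_sum hGb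
    rw [← hZR, Multiset.sum_cons] at hZsum
    rw [hmdef, Multiset.sum_add, Multiset.sum_add, hsv, hsw, ← huvw]
    linarith
  obtain ⟨b', hb', hmZ⟩ := main_struct B hB hnd m hmgens hmsum
  -- R is nonempty
  have hk2 : 2 ≤ b.1 := hGb.1
  have hRcard : Multiset.card R = b.1 - 1 := by
    have := congrArg Multiset.card hZR
    rw [Multiset.card_cons, Z_card] at this
    omega
  have hRne : R ≠ 0 := by
    intro h
    rw [h] at hRcard
    simp at hRcard
    omega
  obtain ⟨y, hyR⟩ := Multiset.exists_mem_of_ne_zero hRne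
  have hyZb' : y ∈ gen b'.1 b'.2 := by
    have : y ∈ Z b'.1 b'.2 := hmZ ▸ (by
      rw [hmdef]
      exact Multiset.mem_add.2 (Or.inr hyR))
    obtain ⟨j, hj, rfl⟩ := Z_mem_iff.1 this
    exact ⟨j, hj, rfl⟩
  have hyZb : y ∈ gen b.1 b.2 := by
    obtain ⟨j, hj, rfl⟩ := Z_mem_iff.1 (hRsub y hyR)
    exact ⟨j, hj, rfl⟩
  have hbb' : b = b' := block_eq_of_common hB hnd hb hb' hyZb hyZb'
  rw [← hbb'] at hmZ
  -- m = Z b = x ::ₘ R, so mv + mw = {x}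
  have heq : mv + mw + R = {x} + R := by
    rw [← hmdef, hmZ, ← hZR, Multiset.singleton_add]
  have hcancel : mv + mw = ({x} : Multiset ℚ) := add_right_cancel heq
  have hc1 : Multiset.card (mv + mw) = 1 := by rw [hcancel]; simp
  have hcv : 0 < Multiset.card mv := Multiset.card_pos.2 hnev
  have hcw : 0 < Multiset.card mw := Multiset.card_pos.2 hnew
  rw [Multiset.card_add] at hc1
  omega

end Main

end S9

namespace S9

section Main2

variable {B : List (ℕ × ℕ)} (hB : ∀ b ∈ B, Good b.1 b.2)
  (hnd : (B.map Prod.snd).Nodup)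

include hB hnd

lemma sqfree : ¬ ∃ v ∈ HH B, ∃ w ∈ HH B, v ≠ 0 ∧ w ≠ 0 ∧ (1:ℚ) = v + v + w := by
  rintro ⟨v, hv, w, hw, hv0, hw0, h1⟩
  obtain ⟨mv, hmv, hsv, hnev⟩ := nonzero_rep hB hv hv0
  obtain ⟨mw, hmw, hsw, hnew⟩ := nonzero_rep hB hw hw0
  set m := mv + mv + mw with hmdef
  have hmgens : ∀ y ∈ m, y ∈ gens B := by
    intro y hy
    rcases Multiset.mem_add.1 hy with h | h
    · rcases Multiset.mem_add.1 h with h' | h' <;> exact hmv y h'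
    · exact hmw y h
  have hmsum : m.sum = 1 := by
    rw [hmdef, Multiset.sum_add, Multiset.sum_add, hsv, hsw, ← h1]
  obtain ⟨b, hb, hmZ⟩ := main_struct B hB hnd m hmgens hmsum
  obtain ⟨x, hx⟩ := Multiset.exists_mem_of_ne_zero hnev
  have hcx : 1 ≤ mv.count x := Multiset.one_le_count_iff_mem.2 hx
  have hcount : 2 ≤ m.count x := by
    rw [hmdef, Multiset.count_add, Multiset.count_add]
    omega
  have hnodup := Z_nodup (hB b hb)
  have := Multiset.nodup_iff_count_le_one.1 hnodup x
  rw [← hmZ] at this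
  omega

lemma fact_char (k : ℕ) (z : Multiset ℚ) :
    (IsFactorizationOf (HH B) 1 z ∧ Multiset.card z = k) ↔
      ∃ b ∈ B, b.1 = k ∧ z = Z b.1 b.2 := by
  constructor
  · rintro ⟨⟨hatoms, hsum⟩, hcard⟩
    have hgens : ∀ x ∈ z, x ∈ gens B := fun x hx => atom_mem_gens hB (hatoms x hx)
    obtain ⟨b, hb, hz⟩ := main_struct B hB hnd z hgens hsum
    refine ⟨b, hb, ?_, hz⟩
    rw [← hcard, hz, Z_card]
  · rintro ⟨b, hb, rfl, rfl⟩
    refine ⟨⟨?_, Z_sum (hB b hb)⟩, Z_card⟩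
    intro x hx
    exact gens_atom hB hnd (Z_subset_gens hB hb x hx)

lemma fact_count (k : ℕ) (hk : 2 ≤ k) :
    {z : Multiset ℚ | IsFactorizationOf (HH B) 1 z ∧ Multiset.card z = k}.ncard
      = (B.filter (fun b => b.1 = k)).length := by
  classical
  have hseteq : {z : Multiset ℚ | IsFactorizationOf (HH B) 1 z ∧ Multiset.card z = k}
      = (fun b : ℕ × ℕ => Z b.1 b.2) '' ↑((B.filter (fun b => b.1 = k)).toFinset) := by
    ext z
    rw [Set.mem_setOf_eq, fact_char hB hnd k z]
    simp only [Set.mem_image, Finset.mem_coe, List.mem_toFinset, List.mem_filter,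
      decide_eq_true_eq]
    constructor
    · rintro ⟨b, hb, hbk, rfl⟩; exact ⟨b, ⟨hb, hbk⟩, rfl⟩
    · rintro ⟨b, ⟨hb, hbk⟩, rfl⟩; exact ⟨b, hb, hbk, rfl⟩
  rw [hseteq]
  have hinj : Set.InjOn (fun b : ℕ × ℕ => Z b.1 b.2)
      ↑((B.filter (fun b => b.1 = k)).toFinset) := by
    intro b hb b' hb' hZ
    simp only [Finset.mem_coe, List.mem_toFinset, List.mem_filter, decide_eq_true_eq] at hb hb'
    have hbB := hb.1
    have hb'B := hb'.1
    have hk1 : 0 < b.1 := by have := (hB b hbB).1; omega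
    have hy : gg b.1 b.2 0 ∈ Z b.1 b.2 := Z_mem_iff.2 ⟨0, hk1, rfl⟩
    have hy' : gg b.1 b.2 0 ∈ Z b'.1 b'.2 := by
      have hZ' : Z b.1 b.2 = Z b'.1 b'.2 := hZ
      rw [← hZ']; exact hy
    have hgb : gg b.1 b.2 0 ∈ gen b.1 b.2 := ⟨0, hk1, rfl⟩
    have hgb' : gg b.1 b.2 0 ∈ gen b'.1 b'.2 := by
      obtain ⟨j, hj, he⟩ := Z_mem_iff.1 hy'
      exact ⟨j, hj, he⟩
    exact block_eq_of_common hB hnd hbB hb'B hgb hgb'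
  rw [Set.ncard_image_of_injOn hinj, Set.ncard_coe_finset]
  exact List.toFinset_card_of_nodup ((List.Nodup.of_map _ hnd).filter _)

end Main2

lemma filter_fst_length (B : List (ℕ × ℕ)) (k : ℕ) :
    (B.filter (fun b => b.1 = k)).length = (B.map Prod.fst).count k := by
  induction B with
  | nil => simp
  | cons b B ih =>
      by_cases h : b.1 = k <;>
        simp [List.filter_cons, List.count_cons, h, ih]

open Classical in
noncomputable def pick (k lo : ℕ) : ℕ :=
  if h : ∃ q, Nat.Prime q ∧ (max lo ((k+1)^(k+2))) < q ∧ q ≡ 1 [MOD k] then h.choose else 0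

open Classical in
lemma pick_spec {k : ℕ} (hk : k ≠ 0) (lo : ℕ) :
    Nat.Prime (pick k lo) ∧ lo < pick k lo ∧ (k+1)^(k+2) < pick k lo ∧
      pick k lo ≡ 1 [MOD k] := by
  have hex : ∃ q, Nat.Prime q ∧ (max lo ((k+1)^(k+2))) < q ∧ q ≡ 1 [MOD k] := by
    obtain ⟨q, hq1, hq2, hq3⟩ := Nat.exists_prime_gt_modEq_one (k := k) (max lo ((k+1)^(k+2))) hk
    exact ⟨q, hq1, hq2, hq3⟩
  unfold pick
  rw [dif_pos hex]
  obtain ⟨h1, h2, h3⟩ := hex.choose_spec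
  exact ⟨h1, (max_lt_iff.1 h2).1, (max_lt_iff.1 h2).2, h3⟩

noncomputable def go : List ℕ → ℕ → List (ℕ × ℕ)
  | [], _ => []
  | k :: ks, lo => (k, pick k lo) :: go ks (pick k lo)

lemma go_spec : ∀ (L : List ℕ) (lo : ℕ), (∀ k ∈ L, 2 ≤ k) →
    (∀ b ∈ go L lo, Good b.1 b.2 ∧ lo < b.2) ∧ ((go L lo).map Prod.snd).Nodup ∧
      (go L lo).map Prod.fst = L := by
  intro L
  induction L with
  | nil => intro lo _; simp [go]
  | cons k ks ih =>
      intro lo hL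
      have hk : 2 ≤ k := hL k ((List.mem_cons_self (a := k) (l := ks)))
      obtain ⟨hp, hlo, hbig, hmod⟩ := pick_spec (show k ≠ 0 by omega) lo
      obtain ⟨ih1, ih2, ih3⟩ := ih (pick k lo) (fun k' hk' => hL k' (List.mem_cons_of_mem _ hk'))
      refine ⟨?_, ?_, ?_⟩
      · intro b hb
        rcases List.mem_cons.1 hb with rfl | hb'
        · exact ⟨⟨hk, hp, hmod, hbig⟩, hlo⟩
        · obtain ⟨hg, hgt⟩ := ih1 b hb'
          exact ⟨hg, by omega⟩
      · rw [show go (k :: ks) lo = (k, pick k lo) :: go ks (pick k lo) from rfl, List.map_cons]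
        rw [List.nodup_cons]
        constructor
        · intro hmem
          obtain ⟨b, hb, hbe⟩ := List.mem_map.1 hmem
          have := (ih1 b hb).2
          omega
        · exact ih2
      · rw [show go (k :: ks) lo = (k, pick k lo) :: go ks (pick k lo) from rfl, List.map_cons, ih3]

end S9

namespace S9

lemma list_sum_single (g : ℕ → ℕ) (k : ℕ) (h0 : ∀ k', k' ≠ k → g k' = 0) :
    ∀ (l : List ℕ), l.Nodup → (l.map g).sum = if k ∈ l then g k else 0 := by
  intro l
  induction l with
  | nil => simp
  | cons a l ih =>
      intro hnd
      rw [List.map_cons, List.sum_cons, ih (List.nodup_cons.1 hnd).2]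
      by_cases hak : a = k
      · subst hak
        rw [if_neg (List.nodup_cons.1 hnd).1, if_pos ((List.mem_cons_self (a := a) (l := l)))]
        omega
      · rw [h0 a hak]
        by_cases hkl : k ∈ l
        · rw [if_pos hkl, if_pos (List.mem_cons_of_mem _ hkl)]
          omega
        · rw [if_neg hkl, if_neg (by
            intro h
            rcases List.mem_cons.1 h with h' | h'
            · exact hak h'.symm
            · exact hkl h')]

end S9


/-- For every finitely supported map `f : ℕ_{≥2} → ℕ` that is not
identically zero there exists a finitely generated additive submonoid `H ⊆ ℚ_{≥0}`
with `ℕ ⊆ H`, all of whose atoms are `< 1`, such that `1` is squarefree in `H` and,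
for every `k ≥ 2`, the number of factorizations of `1` in `H` of length `k` is `f k`. -/
theorem stmt9 (f : ℕ → ℕ) (hsupp : {k : ℕ | 2 ≤ k ∧ f k ≠ 0}.Finite)
    (hne : ∃ k, 2 ≤ k ∧ f k ≠ 0) :
    ∃ H : AddSubmonoid ℚ, H.FG ∧ (∀ x ∈ H, 0 ≤ x) ∧ (∀ n : ℕ, (n : ℚ) ∈ H) ∧
      (∀ u, IsAtomOf H u → u < 1) ∧
      (¬ ∃ b ∈ H, ∃ c ∈ H, b ≠ 0 ∧ c ≠ 0 ∧ (1 : ℚ) = b + b + c) ∧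
      ∀ k : ℕ, 2 ≤ k →
        {z | IsFactorizationOf H 1 z ∧ Multiset.card z = k}.ncard = f k := by
  classical
  set K := hsupp.toFinset with hK
  have hKmem : ∀ k, k ∈ K ↔ (2 ≤ k ∧ f k ≠ 0) := fun k => hsupp.mem_toFinset
  set L : List ℕ := K.toList.flatMap (fun k => List.replicate (f k) k) with hL
  have hLmem : ∀ k ∈ L, 2 ≤ k := by
    intro k hk
    obtain ⟨k', hk', hkr⟩ := List.mem_flatMap.1 hk
    have h := List.eq_of_mem_replicate hkr
    have h2 := ((hKmem k').1 (Finset.mem_toList.1 hk')).1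
    omega
  have hLcount : ∀ k, 2 ≤ k → L.count k = f k := by
    intro k hk2
    rw [hL, List.count_flatMap]
    have h0 : ∀ k', k' ≠ k → (List.count k ∘ fun k'' => List.replicate (f k'') k'') k' = 0 := by
      intro k' hk'
      simp only [Function.comp_apply]
      rw [List.count_replicate, if_neg (by simpa using hk')]
    have hgk : (List.count k ∘ fun k'' => List.replicate (f k'') k'') k = f k := by
      simp only [Function.comp_apply]
      rw [List.count_replicate, if_pos (by simp)]

    rw [S9.list_sum_single _ k h0 K.toList (Finset.nodup_toList K)]
    by_cases hmem : k ∈ K.toList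
    · rw [if_pos hmem, hgk]
    · rw [if_neg hmem]
      have : ¬ (2 ≤ k ∧ f k ≠ 0) := fun h => hmem (Finset.mem_toList.2 ((hKmem k).2 h))
      omega
  obtain ⟨hgo1, hgo2, hgo3⟩ := S9.go_spec L 0 hLmem
  set B := S9.go L 0 with hBdef
  have hB : ∀ b ∈ B, S9.Good b.1 b.2 := fun b hb => (hgo1 b hb).1
  have hnd : (B.map Prod.snd).Nodup := hgo2
  have hBne : B ≠ [] := by
    intro h
    obtain ⟨k0, hk0, hf0⟩ := hne
    have hcnt := hLcount k0 hk0
    rw [show L = B.map Prod.fst from hgo3.symm, h] at hcnt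
    simp at hcnt
    exact hf0 hcnt.symm
  refine ⟨S9.HH B, S9.HH_fg B, S9.HH_nonneg hB, S9.nat_mem_HH hB hBne, ?_, S9.sqfree hB hnd, ?_⟩
  · intro u hu
    obtain ⟨b, hb, hgen⟩ := S9.atom_mem_gens hB hu
    exact (S9.gen_pos (hB b hb) hgen).2
  · intro k hk
    rw [S9.fact_count hB hnd k hk, S9.filter_fst_length, hgo3, hLcount k hk]
end

section
/- For every finite nonempty set D of positive integers there exists a numerical monoid H such that D ⊆ Δ(H), where Δ(H) is the set of distances of H. -/
/-- A numerical monoid: an additive submonoid of `ℕ` with finite complement. -/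
def IsNumericalMonoid (H : AddSubmonoid ℕ) : Prop :=
  ((H : Set ℕ)ᶜ).Finite

/-- `u` is an atom of the additive submonoid `H` of `ℕ`: it is a nonzero element of `H`
that is not the sum of two nonzero elements of `H`. -/
def IsAtomOfN (H : AddSubmonoid ℕ) (u : ℕ) : Prop :=
  u ∈ H ∧ u ≠ 0 ∧ ∀ v ∈ H, ∀ w ∈ H, v ≠ 0 → w ≠ 0 → u ≠ v + w

/-- `z` is a factorization of `a` in `H`: a multiset of atoms of `H` with sum `a`. -/
def IsFactorizationOfN (H : AddSubmonoid ℕ) (a : ℕ) (z : Multiset ℕ) : Prop :=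
  (∀ x ∈ z, IsAtomOfN H x) ∧ z.sum = a

/-- The set of lengths of `a` in `H`. -/
def SetOfLengths (H : AddSubmonoid ℕ) (a : ℕ) : Set ℕ :=
  {n | ∃ z, IsFactorizationOfN H a z ∧ Multiset.card z = n}

/-- `d` belongs to the set of distances `Δ(H)`: there is an element `a ∈ H` whose set of
lengths contains two consecutive lengths `x < y` (no length strictly in between) with
`y - x = d`. -/
def IsDistanceOf (H : AddSubmonoid ℕ) (d : ℕ) : Prop :=
  ∃ a ∈ H, ∃ x ∈ SetOfLengths H a, ∃ y ∈ SetOfLengths H a,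
    x < y ∧ y - x = d ∧ ∀ n ∈ SetOfLengths H a, ¬ (x < n ∧ n < y)

namespace Stmt10Aux

def M (D : Finset ℕ) : ℕ := D.sup id
def B (D : Finset ℕ) : ℕ := M D + 2
def n (D : Finset ℕ) : ℕ := 3 * (M D + 2) * (M D + 1)
def β (D : Finset ℕ) (d : ℕ) : ℕ := B D * (M D + 1 - d)
def g1 (D : Finset ℕ) : ℕ := 2 * n D + 1
def G (D : Finset ℕ) (d : ℕ) : ℕ := (1 + β D d + d) * n D + β D d
def T (D : Finset ℕ) : ℕ := n D * n D + n D
def Gset (D : Finset ℕ) : Set ℕ :=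
  insert (n D) (insert (g1 D) {x | ∃ d ∈ D, x = G D d})
def S (D : Finset ℕ) : AddSubmonoid ℕ := AddSubmonoid.closure (Gset D)

def H (D : Finset ℕ) : AddSubmonoid ℕ where
  carrier := {x | x ∈ S D ∨ T D ≤ x}
  zero_mem' := Or.inl (zero_mem _)
  add_mem' := by
    intro a b ha hb
    rcases ha with ha | ha
    · rcases hb with hb | hb
      · exact Or.inl (add_mem ha hb)
      · exact Or.inr (le_trans hb (Nat.le_add_left _ _))
    · exact Or.inr (le_trans ha (Nat.le_add_right _ _))

lemma mem_H {D : Finset ℕ} {x : ℕ} : x ∈ H D ↔ x ∈ S D ∨ T D ≤ x := Iff.rfl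

variable (D : Finset ℕ)

lemma n_pos : 0 < n D := by unfold n; positivity

lemma n_ge6 : 6 ≤ n D := by
  unfold n; nlinarith [Nat.zero_le (M D), sq_nonneg (M D)]

lemma le_M {d : ℕ} (hd : d ∈ D) : d ≤ M D := Finset.le_sup (f := id) hd

lemma β_le {d : ℕ} (hd : d ∈ D) (h1 : 0 < d) : β D d ≤ (M D + 2) * M D := by
  have hM := le_M D hd
  unfold β B
  exact Nat.mul_le_mul_left _ (by omega)

lemma n_big {d : ℕ} (hd : d ∈ D) (h1 : 0 < d) : 2 * β D d + d + 1 < n D := by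
  have hβ := β_le D hd h1
  have hM := le_M D hd
  unfold n
  nlinarith [hβ, hM]

lemma β_lt_n {d : ℕ} (hd : d ∈ D) (h1 : 0 < d) : β D d < n D := by
  have := n_big D hd h1
  omega

lemma B_le_β {d : ℕ} (hd : d ∈ D) : B D ≤ β D d := by
  have hM := le_M D hd
  unfold β
  exact Nat.le_mul_of_pos_right _ (by omega)

lemma β_antitone {d e : ℕ} (hd : d ∈ D) (he : e ∈ D) (h : β D e ≤ β D d) : d ≤ e := by
  have hdM := le_M D hd
  have heM := le_M D he
  unfold β B at h
  have := Nat.le_of_mul_le_mul_left h (show 0 < M D + 2 by omega)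
  omega

/-- The value of a "representation" (p copies of n, q copies of g1, c e copies of G e). -/
def val (p q : ℕ) (c : ℕ → ℕ) : ℕ :=
  p * n D + q * g1 D + D.sum (fun e => c e * G D e)

lemma val_eq (p q : ℕ) (c : ℕ → ℕ) :
    val D p q c =
      (p + 2 * q + D.sum (fun e => (1 + β D e + e) * c e)) * n D
        + (q + D.sum (fun e => β D e * c e)) := by
  unfold val g1 G
  have h1 : ∀ e ∈ D, c e * ((1 + β D e + e) * n D + β D e)
      = (1 + β D e + e) * c e * n D + β D e * c e := fun e _ => by ring
  rw [Finset.sum_congr rfl h1, Finset.sum_add_distrib, ← Finset.sum_mul]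
  ring

lemma u_le_A (p q : ℕ) (c : ℕ → ℕ) :
    q + D.sum (fun e => β D e * c e)
      ≤ p + 2 * q + D.sum (fun e => (1 + β D e + e) * c e) := by
  have h := Finset.sum_le_sum (f := fun e => β D e * c e)
    (g := fun e => (1 + β D e + e) * c e) (s := D)
    (fun e _ => Nat.mul_le_mul_right (c e) (by omega))
  linarith

lemma A_split (p q : ℕ) (c : ℕ → ℕ) :
    p + 2 * q + D.sum (fun e => (1 + β D e + e) * c e)
      = (p + q + D.sum c) + (q + D.sum (fun e => β D e * c e))
          + D.sum (fun e => e * c e) := by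
  have h1 : D.sum (fun e => (1 + β D e + e) * c e)
      = D.sum c + D.sum (fun e => β D e * c e) + D.sum (fun e => e * c e) := by
    rw [← Finset.sum_add_distrib, ← Finset.sum_add_distrib]
    exact Finset.sum_congr rfl (fun e _ => by ring)
  rw [h1]; ring

lemma split_eq {A u C r : ℕ} (h : A * n D + u = C * n D + r) (hu : u ≤ A)
    (hC : C < n D) (hr : r < n D) : A = C ∧ u = r := by
  have hn := n_pos D
  have hA : A ≤ C := by nlinarith
  obtain ⟨t, ht⟩ := Nat.le.dest hA
  rw [← ht, add_mul] at h
  have h2 : u = t * n D + r := by omega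
  have ht0 : t = 0 := by
    rcases Nat.eq_zero_or_pos t with h0 | h0
    · exact h0
    · exfalso
      have : n D ≤ t * n D := Nat.le_mul_of_pos_left _ h0
      omega
  subst ht0
  simp at h2 ht
  omega

lemma analyze (p q : ℕ) (c : ℕ → ℕ) (C r : ℕ)
    (h : val D p q c = C * n D + r) (hC : C < n D) (hr : r < n D) :
    q + D.sum (fun e => β D e * c e) = r ∧
      (p + q + D.sum c) + r + D.sum (fun e => e * c e) = C := by
  rw [val_eq] at h
  obtain ⟨hA, hu⟩ := split_eq D h (u_le_A D p q c) hC hr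
  refine ⟨hu, ?_⟩
  have h3 := A_split D p q c
  linarith

lemma G_pos {d : ℕ} : 0 < G D d := by
  have := n_pos D
  unfold G
  nlinarith

lemma gens_pos {x : ℕ} (hx : x ∈ Gset D) : 0 < x := by
  have hn := n_pos D
  rcases hx with rfl | hx
  · exact hn
  rcases hx with rfl | hx
  · unfold g1; omega
  obtain ⟨d, _, rfl⟩ := hx
  exact G_pos D

lemma val_cnt_pos (p q : ℕ) (c : ℕ → ℕ) (h : val D p q c ≠ 0) :
    1 ≤ p + q + D.sum c := by
  by_contra hc
  apply h
  have h0 : p = 0 ∧ q = 0 ∧ D.sum c = 0 := by omega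
  obtain ⟨rfl, rfl, hs⟩ := h0
  rw [Finset.sum_eq_zero_iff] at hs
  unfold val
  rw [Finset.sum_eq_zero (fun e he => by rw [hs e he, zero_mul])]
  simp

lemma val_add (p₁ q₁ p₂ q₂ : ℕ) (c₁ c₂ : ℕ → ℕ) :
    val D (p₁ + p₂) (q₁ + q₂) (fun e => c₁ e + c₂ e)
      = val D p₁ q₁ c₁ + val D p₂ q₂ c₂ := by
  unfold val
  rw [Finset.sum_congr rfl (fun e _ => add_mul (c₁ e) (c₂ e) (G D e)),
    Finset.sum_add_distrib]
  ring

lemma rep_of_mem_S {x : ℕ} (hx : x ∈ S D) : ∃ p q c, x = val D p q c := by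
  induction hx using AddSubmonoid.closure_induction with
  | mem x hx =>
    rcases hx with rfl | hx
    · exact ⟨1, 0, fun _ => 0, by simp [val]⟩
    rcases hx with rfl | hx
    · exact ⟨0, 1, fun _ => 0, by simp [val]⟩
    obtain ⟨d, hd, rfl⟩ := hx
    refine ⟨0, 0, fun e => if e = d then 1 else 0, ?_⟩
    unfold val
    rw [Finset.sum_congr rfl
      (fun e _ => by split <;> simp : ∀ e ∈ D,
        (if e = d then 1 else 0) * G D e = if e = d then G D e else 0)]
    rw [Finset.sum_ite_eq' D d (fun e => G D e), if_pos hd]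
    simp
  | zero => exact ⟨0, 0, fun _ => 0, by simp [val]⟩
  | add x y hx hy ihx ihy =>
    obtain ⟨p₁, q₁, c₁, rfl⟩ := ihx
    obtain ⟨p₂, q₂, c₂, rfl⟩ := ihy
    exact ⟨p₁ + p₂, q₁ + q₂, fun e => c₁ e + c₂ e, (val_add D _ _ _ _ _ _).symm⟩

lemma exists_gen_add {x : ℕ} (hx : x ∈ S D) :
    x = 0 ∨ ∃ g ∈ Gset D, ∃ s, s ∈ S D ∧ x = g + s := by
  induction hx using AddSubmonoid.closure_induction with
  | mem x hx => exact Or.inr ⟨x, hx, 0, zero_mem _, (add_zero x).symm⟩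
  | zero => exact Or.inl rfl
  | add x y hx hy ihx ihy =>
    rcases ihx with rfl | ⟨g, hg, s, hs, rfl⟩
    · rw [zero_add]; exact ihy
    · exact Or.inr ⟨g, hg, s + y, add_mem hs hy, by rw [add_assoc]⟩

lemma atom_mem_gens {x : ℕ} (hx : x ∈ S D) (ha : IsAtomOfN (H D) x) :
    x ∈ Gset D := by
  rcases exists_gen_add D hx with rfl | ⟨g, hg, s, hs, rfl⟩
  · exact absurd rfl ha.2.1
  rcases Nat.eq_zero_or_pos s with rfl | hs0
  · rwa [add_zero]
  exact absurd rfl (ha.2.2 g (Or.inl (AddSubmonoid.subset_closure hg)) s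
    (Or.inl hs) (gens_pos D hg).ne' hs0.ne')

lemma sigma_ge {d : ℕ} (c : ℕ → ℕ) (hd : d ∈ D)
    (hsb : D.sum (fun e => β D e * c e) ≤ β D d)
    {e : ℕ} (he : e ∈ D) (hce : c e ≠ 0) :
    d ≤ D.sum (fun e => e * c e) := by
  have h1 : β D e ≤ β D d := by
    have h2 : β D e ≤ β D e * c e :=
      Nat.le_mul_of_pos_right _ (Nat.pos_of_ne_zero hce)
    have h3 : β D e * c e ≤ D.sum (fun e => β D e * c e) :=
      Finset.single_le_sum (f := fun e => β D e * c e) (fun i _ => Nat.zero_le _) he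
    omega
  have hde : d ≤ e := β_antitone D hd he h1
  have h4 : e ≤ e * c e := Nat.le_mul_of_pos_right _ (Nat.pos_of_ne_zero hce)
  have h5 : e * c e ≤ D.sum (fun e => e * c e) :=
    Finset.single_le_sum (f := fun e => e * c e) (fun i _ => Nat.zero_le _) he
  omega

lemma gens_lt_T (hpos : ∀ d ∈ D, 0 < d) {x : ℕ} (hx : x ∈ Gset D) : x < T D := by
  have hn := n_pos D
  rcases hx with rfl | hx
  · unfold T; nlinarith
  rcases hx with rfl | hx
  · have h6 := n_ge6 D
    unfold g1 T; nlinarith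
  obtain ⟨d, hd, rfl⟩ := hx
  have hbig := n_big D hd (hpos d hd)
  have h1 : 2 + β D d + d ≤ n D := by omega
  have h2 : (2 + β D d + d) * n D ≤ n D * n D := Nat.mul_le_mul_right _ h1
  have h3 : β D d < n D := by omega
  unfold G T
  nlinarith

lemma gen_is_atom (hpos : ∀ d ∈ D, 0 < d) {x : ℕ} (hx : x ∈ Gset D) :
    IsAtomOfN (H D) x := by
  have hn := n_pos D
  have h6 := n_ge6 D
  refine ⟨Or.inl (AddSubmonoid.subset_closure hx), (gens_pos D hx).ne', ?_⟩
  intro v hv w hw hv0 hw0 heq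
  have hxT : x < T D := gens_lt_T D hpos hx
  have hvS : v ∈ S D := by
    rcases hv with h | h
    · exact h
    · exfalso; omega
  have hwS : w ∈ S D := by
    rcases hw with h | h
    · exact h
    · exfalso; omega
  obtain ⟨p₁, q₁, c₁, rfl⟩ := rep_of_mem_S D hvS
  obtain ⟨p₂, q₂, c₂, rfl⟩ := rep_of_mem_S D hwS
  have hcnt₁ := val_cnt_pos D p₁ q₁ c₁ hv0
  have hcnt₂ := val_cnt_pos D p₂ q₂ c₂ hw0
  have hval : val D (p₁ + p₂) (q₁ + q₂) (fun e => c₁ e + c₂ e) = x := by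
    rw [val_add]; omega
  set p := p₁ + p₂
  set q := q₁ + q₂
  set c : ℕ → ℕ := fun e => c₁ e + c₂ e with hc
  have hcnt : 2 ≤ p + q + D.sum c := by
    have : D.sum c = D.sum c₁ + D.sum c₂ := Finset.sum_add_distrib
    omega
  -- case on which generator x is
  rcases hx with rfl | hx
  · -- x = n D
    have h := analyze D p q c 1 0 (by rw [hval]; ring) (by omega) hn
    omega
  rcases hx with rfl | hx
  · -- x = g1 D
    have h := analyze D p q c 2 1 (by rw [hval]; unfold g1; ring) (by omega) (by omega)
    omega
  obtain ⟨d, hd, rfl⟩ := hx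
  have hd1 := hpos d hd
  have hbig := n_big D hd hd1
  have h := analyze D p q c (1 + β D d + d) (β D d)
    (by rw [hval]; unfold G; ring) (by omega) (by omega)
  obtain ⟨hu, hA⟩ := h
  by_cases hc0 : ∀ e ∈ D, c e = 0
  · have hsig : D.sum (fun e => e * c e) = 0 :=
      Finset.sum_eq_zero (fun e he => by rw [hc0 e he, mul_zero])
    have hsbeta : D.sum (fun e => β D e * c e) = 0 :=
      Finset.sum_eq_zero (fun e he => by rw [hc0 e he, mul_zero])
    have hB := B_le_β D hd
    have hM := le_M D hd
    unfold B at hB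
    omega
  · push_neg at hc0
    obtain ⟨e, he, hce⟩ := hc0
    have hsig : d ≤ D.sum (fun e => e * c e) :=
      sigma_ge D c hd (by omega) he hce
    omega

lemma a_lt_T {d : ℕ} (hd : d ∈ D) (hd1 : 0 < d) :
    (2 * β D d + d + 1) * n D + β D d < T D := by
  have hn := n_pos D
  have hbig := n_big D hd hd1
  have h1 : (2 * β D d + d + 1 + 1) * n D ≤ n D * n D :=
    Nat.mul_le_mul_right _ (by omega)
  unfold T
  nlinarith

lemma rep_of_multiset (z : Multiset ℕ) (hz : ∀ x ∈ z, x ∈ Gset D) :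
    ∃ p q c, Multiset.card z = p + q + D.sum c ∧ z.sum = val D p q c := by
  induction z using Multiset.induction with
  | empty => exact ⟨0, 0, fun _ => 0, by simp, by simp [val]⟩
  | cons x z ih =>
    obtain ⟨p, q, c, hcard, hsum⟩ := ih (fun y hy => hz y (Multiset.mem_cons_of_mem hy))
    have hx := hz x (Multiset.mem_cons_self x z)
    rcases hx with rfl | hx
    · refine ⟨p + 1, q, c, ?_, ?_⟩
      · rw [Multiset.card_cons, hcard]; ring
      · rw [Multiset.sum_cons, hsum]; unfold val; ring
    rcases hx with rfl | hx
    · refine ⟨p, q + 1, c, ?_, ?_⟩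
      · rw [Multiset.card_cons, hcard]; ring
      · rw [Multiset.sum_cons, hsum]; unfold val; ring
    obtain ⟨d, hd, rfl⟩ := hx
    refine ⟨p, q, fun e => if e = d then c e + 1 else c e, ?_, ?_⟩
    · have h1 : D.sum (fun e => if e = d then c e + 1 else c e)
          = D.sum c + 1 := by
        have h2 : ∀ e ∈ D, (if e = d then c e + 1 else c e)
            = c e + (if e = d then 1 else 0) := fun e _ => by split <;> simp
        rw [Finset.sum_congr rfl h2, Finset.sum_add_distrib,
          Finset.sum_ite_eq' D d (fun _ => 1), if_pos hd]
      rw [Multiset.card_cons, hcard, h1]; omega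
    · have h1 : D.sum (fun e => (if e = d then c e + 1 else c e) * G D e)
          = D.sum (fun e => c e * G D e) + G D d := by
        have h2 : ∀ e ∈ D, (if e = d then c e + 1 else c e) * G D e
            = c e * G D e + (if e = d then G D e else 0) := fun e _ => by
          split <;> ring
        rw [Finset.sum_congr rfl h2, Finset.sum_add_distrib,
          Finset.sum_ite_eq' D d (fun e => G D e), if_pos hd]
      rw [Multiset.sum_cons, hsum]
      unfold val
      rw [h1]
      ring

lemma length_analysis (hpos : ∀ d ∈ D, 0 < d) {d : ℕ} (hd : d ∈ D) :
    ∀ ℓ ∈ SetOfLengths (H D) ((2 * β D d + d + 1) * n D + β D d),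
      ℓ = β D d + d + 1 ∨ ℓ ≤ β D d + 1 := by
  have hn := n_pos D
  have hd1 := hpos d hd
  have hbig := n_big D hd hd1
  rintro ℓ ⟨z, ⟨hatoms, hsum⟩, hcard⟩
  have hgens : ∀ x ∈ z, x ∈ Gset D := by
    intro x hxz
    have hxa := hatoms x hxz
    have hx_le : x ≤ z.sum :=
      Multiset.single_le_sum (fun y _ => Nat.zero_le y) x hxz
    have hxT : x < T D := by
      have := a_lt_T D hd hd1
      omega
    have hxS : x ∈ S D := by
      rcases hxa.1 with h | h
      · exact h
      · exfalso; omega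
    exact atom_mem_gens D hxS hxa
  obtain ⟨p, q, c, hcard', hsum'⟩ := rep_of_multiset D z hgens
  have hval : val D p q c = (2 * β D d + d + 1) * n D + β D d := by
    rw [← hsum', hsum]
  obtain ⟨hu, hA⟩ := analyze D p q c (2 * β D d + d + 1) (β D d)
    hval (by omega) (by omega)
  by_cases hc0 : ∀ e ∈ D, c e = 0
  · have hsig : D.sum (fun e => e * c e) = 0 :=
      Finset.sum_eq_zero (fun e he => by rw [hc0 e he, mul_zero])
    have hsc : D.sum c = 0 := Finset.sum_eq_zero hc0
    left; omega
  · push_neg at hc0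
    obtain ⟨e, he, hce⟩ := hc0
    have hsig : d ≤ D.sum (fun e => e * c e) :=
      sigma_ge D c hd (by omega) he hce
    right; omega

end Stmt10Aux

open Stmt10Aux in
/-- For every finite nonempty set `D` of positive integers there is a
numerical monoid `H` with `D ⊆ Δ(H)`. -/
theorem stmt10 (D : Finset ℕ) (hD : D.Nonempty) (hpos : ∀ d ∈ D, 0 < d) :
    ∃ H : AddSubmonoid ℕ, IsNumericalMonoid H ∧ ∀ d ∈ D, IsDistanceOf H d := by
  classical
  refine ⟨H D, ?_, ?_⟩
  · -- numerical monoid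
    apply Set.Finite.subset (Set.finite_Iio (T D))
    intro x hx
    have hx' : ¬(x ∈ S D ∨ T D ≤ x) := hx
    push_neg at hx'
    exact hx'.2
  · intro d hd
    have hd1 := hpos d hd
    have hn := n_pos D
    have hnG : (n D) ∈ Gset D := Set.mem_insert _ _
    have hg1G : (g1 D) ∈ Gset D := Set.mem_insert_of_mem _ (Set.mem_insert _ _)
    have hGG : (G D d) ∈ Gset D :=
      Set.mem_insert_of_mem _ (Set.mem_insert_of_mem _ ⟨d, hd, rfl⟩)
    have hnS : (n D) ∈ S D := AddSubmonoid.subset_closure hnG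
    have hg1S : (g1 D) ∈ S D := AddSubmonoid.subset_closure hg1G
    have hGS : (G D d) ∈ S D := AddSubmonoid.subset_closure hGG
    refine ⟨(2 * β D d + d + 1) * n D + β D d, ?_, β D d + 1, ?_, β D d + d + 1, ?_,
      by omega, by omega, ?_⟩
    · -- membership in H
      left
      have heq : (2 * β D d + d + 1) * n D + β D d = (β D d) • (n D) + G D d := by
        rw [smul_eq_mul]; unfold G; ring
      rw [heq]
      exact add_mem (AddSubmonoid.nsmul_mem (S D) hnS _) hGS
    · -- x = β d + 1 is a length
      refine ⟨Multiset.replicate (β D d) (n D) + {G D d}, ⟨?_, ?_⟩, ?_⟩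
      · intro y hy
        rw [Multiset.mem_add] at hy
        rcases hy with hy | hy
        · rw [Multiset.eq_of_mem_replicate hy]
          exact gen_is_atom D hpos hnG
        · rw [Multiset.mem_singleton] at hy
          rw [hy]
          exact gen_is_atom D hpos hGG
      · rw [Multiset.sum_add, Multiset.sum_replicate, Multiset.sum_singleton,
          smul_eq_mul]
        unfold G; ring
      · rw [Multiset.card_add, Multiset.card_replicate, Multiset.card_singleton]
    · -- y = β d + d + 1 is a length
      refine ⟨Multiset.replicate (d + 1) (n D) + Multiset.replicate (β D d) (g1 D),
        ⟨?_, ?_⟩, ?_⟩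
      · intro y hy
        rw [Multiset.mem_add] at hy
        rcases hy with hy | hy
        · rw [Multiset.eq_of_mem_replicate hy]
          exact gen_is_atom D hpos hnG
        · rw [Multiset.eq_of_mem_replicate hy]
          exact gen_is_atom D hpos hg1G
      · rw [Multiset.sum_add, Multiset.sum_replicate, Multiset.sum_replicate,
          smul_eq_mul, smul_eq_mul]
        unfold g1; ring
      · rw [Multiset.card_add, Multiset.card_replicate, Multiset.card_replicate]
        omega
    · -- no length strictly between
      intro ℓ hℓ
      have := length_analysis D hpos hd ℓ hℓ
      omega
end

section
/- Let K be a field, H a numerical monoid, and c ∈ H. Then the set of lengths of the monomial X^c in the semigroup algebra K[H] equals the set of lengths of c in H, and for every k ∈ ℕ the number of factorizations of X^c in K[H] of length k (counted up to associates) equals the number of factorizations of c in H of length k. -/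
/-- The semigroup algebra `K[H] ⊆ K[X]`: polynomials whose support is contained in `H`. -/
def semigroupAlgebra (K : Type*) [Field K] (H : AddSubmonoid ℕ) :
    Subalgebra K (Polynomial K) where
  carrier := {p : Polynomial K | ∀ n ∈ p.support, n ∈ H}
  mul_mem' := by
    intro a b ha hb n hn
    rw [Polynomial.mem_support_iff, Polynomial.coeff_mul] at hn
    obtain ⟨⟨i, j⟩, hij, hne⟩ := Finset.exists_ne_zero_of_sum_ne_zero hn
    have hi : a.coeff i ≠ 0 := fun h => hne (by simp [h])
    have hj : b.coeff j ≠ 0 := fun h => hne (by simp [h])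
    have hsum := Finset.HasAntidiagonal.mem_antidiagonal.mp hij
    exact hsum ▸ H.add_mem (ha i (Polynomial.mem_support_iff.mpr hi))
      (hb j (Polynomial.mem_support_iff.mpr hj))
  add_mem' := by
    intro a b ha hb n hn
    rcases Finset.mem_union.mp (Polynomial.support_add hn) with h | h
    · exact ha n h
    · exact hb n h
  algebraMap_mem' := by
    intro r n hn
    have : n = 0 := by
      by_contra h
      simp [Polynomial.algebraMap_eq, Polynomial.mem_support_iff, Polynomial.coeff_C, h] at hn
    exact this ▸ H.zero_mem

/-- The factorizations of `g ∈ K[H]` of length `k`, counted up to associates: multisets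
of `k` associate-classes of irreducible elements of `K[H]` whose product is the class
of `g`. -/
def AlgFactorizationsOfLength {K : Type*} [Field K] {H : AddSubmonoid ℕ}
    (g : semigroupAlgebra K H) (k : ℕ) :
    Set (Multiset (Associates ↥(semigroupAlgebra K H))) :=
  {z | (∀ a ∈ z, ∃ u : ↥(semigroupAlgebra K H), Irreducible u ∧ a = Associates.mk u)
        ∧ z.prod = Associates.mk g ∧ Multiset.card z = k}

open Polynomial

section Aux

variable {K : Type*} [Field K] {H : AddSubmonoid ℕ}

theorem aux_eq_C_mul_X_pow (p q : K[X]) (n : ℕ) (h : p * q = X ^ n) :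
    p.leadingCoeff ≠ 0 ∧ p = C p.leadingCoeff * X ^ p.natDegree := by
  have hX : (X : K[X]) ^ n ≠ 0 := pow_ne_zero _ X_ne_zero
  have hp : p ≠ 0 := fun h0 => hX (by simp [← h, h0])
  have hq : q ≠ 0 := fun h0 => hX (by simp [← h, h0])
  have hdeg : p.natDegree + q.natDegree = n := by
    rw [← natDegree_mul hp hq, h, natDegree_X_pow]
  have htr : p.natTrailingDegree + q.natTrailingDegree = n := by
    rw [← natTrailingDegree_mul hp hq, h, natTrailingDegree_X_pow]
  have h1 := p.natTrailingDegree_le_natDegree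
  have h2 := q.natTrailingDegree_le_natDegree
  have heq : p.natTrailingDegree = p.natDegree := by omega
  refine ⟨leadingCoeff_ne_zero.mpr hp, ?_⟩
  ext m
  rcases eq_or_ne m p.natDegree with rfl | hm
  · rw [coeff_C_mul, coeff_X_pow, if_pos rfl, mul_one]; rfl
  · rw [coeff_C_mul, coeff_X_pow, if_neg hm, mul_zero]
    by_contra h0
    have ha := natTrailingDegree_le_of_mem_supp m (mem_support_iff.mpr h0)
    have hb := le_natDegree_of_ne_zero h0
    omega

theorem aux_Xpow_mem (a : ℕ) (ha : a ∈ H) : (X : K[X]) ^ a ∈ semigroupAlgebra K H := by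
  intro n hn
  rw [support_X_pow a, Finset.mem_singleton] at hn
  exact hn ▸ ha

open scoped Classical in
/-- the monomial `X^a` as an element of `K[H]` (junk value `1` if `a ∉ H`). -/
noncomputable def mon (K : Type*) [Field K] (H : AddSubmonoid ℕ) (a : ℕ) :
    ↥(semigroupAlgebra K H) :=
  if h : a ∈ H then ⟨X ^ a, aux_Xpow_mem a h⟩ else 1

theorem mon_coe {a : ℕ} (ha : a ∈ H) :
    ((mon K H a : ↥(semigroupAlgebra K H)) : K[X]) = X ^ a := by
  rw [mon, dif_pos ha]

theorem mon_add {a b : ℕ} (ha : a ∈ H) (hb : b ∈ H) :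
    mon K H (a + b) = mon K H a * mon K H b := by
  apply Subtype.ext
  push_cast
  rw [mon_coe (H.add_mem ha hb), mon_coe ha, mon_coe hb, pow_add]

theorem aux_isUnit_coe {u : ↥(semigroupAlgebra K H)} (hu : IsUnit u) :
    IsUnit (u : K[X]) := hu.map (Subalgebra.val _)

theorem aux_isUnit_mon_iff {a : ℕ} (ha : a ∈ H) :
    IsUnit (mon K H a) ↔ a = 0 := by
  constructor
  · intro h
    have := natDegree_eq_zero_of_isUnit (aux_isUnit_coe h)
    rwa [mon_coe ha, natDegree_X_pow] at this
  · rintro rfl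
    have : mon K H 0 = 1 := Subtype.ext (by rw [mon_coe ha, pow_zero]; rfl)
    rw [this]; exact isUnit_one

theorem aux_isUnit_C {k : K} (hk : k ≠ 0) (hmem : (C k : K[X]) ∈ semigroupAlgebra K H) :
    IsUnit (⟨C k, hmem⟩ : ↥(semigroupAlgebra K H)) := by
  have : (⟨C k, hmem⟩ : ↥(semigroupAlgebra K H)) = algebraMap K _ k :=
    Subtype.ext (by simp [Polynomial.algebraMap_eq])
  rw [this]
  exact (algebraMap K _).isUnit_map (isUnit_iff_ne_zero.mpr hk)

theorem aux_assoc_coe {x y : ↥(semigroupAlgebra K H)} (h : Associated x y) :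
    Associated (x : K[X]) (y : K[X]) := h.map (Subalgebra.val _)

theorem aux_Xpow_assoc {a b : ℕ} (h : Associated ((X : K[X]) ^ a) (X ^ b)) : a = b := by
  obtain ⟨u, hu⟩ := h
  have := congrArg natDegree hu
  rwa [natDegree_mul (pow_ne_zero _ X_ne_zero) u.ne_zero, natDegree_X_pow,
    natDegree_eq_zero_of_isUnit u.isUnit, natDegree_X_pow, add_zero] at this

end Aux

section Aux2

variable {K : Type*} [Field K] {H : AddSubmonoid ℕ}

theorem aux_isUnit_C' {v : ↥(semigroupAlgebra K H)} {k : K} (hk : k ≠ 0)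
    (hc : (v : K[X]) = C k) : IsUnit v := by
  have : v = algebraMap K _ k := Subtype.ext (by simp [Polynomial.algebraMap_eq, hc])
  rw [this]
  exact (algebraMap K _).isUnit_map (isUnit_iff_ne_zero.mpr hk)

theorem aux_irreducible_of_atom {a : ℕ} (ha : IsAtomOfN H a) :
    Irreducible (mon K H a) := by
  obtain ⟨haH, ha0, hatom⟩ := ha
  constructor
  · rw [aux_isUnit_mon_iff haH]; exact ha0
  · intro v w hvw
    have hcoe : (v : K[X]) * (w : K[X]) = X ^ a := by
      rw [← Subalgebra.coe_mul, ← hvw, mon_coe haH]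
    obtain ⟨hv0, hveq⟩ := aux_eq_C_mul_X_pow (v : K[X]) w a hcoe
    obtain ⟨hw0, hweq⟩ := aux_eq_C_mul_X_pow (w : K[X]) v a (by rw [mul_comm]; exact hcoe)
    have hvne : (v : K[X]) ≠ 0 := fun h0 => hv0 (by rw [h0]; simp)
    have hwne : (w : K[X]) ≠ 0 := fun h0 => hw0 (by rw [h0]; simp)
    have hvH : (v : K[X]).natDegree ∈ H := v.2 _ (mem_support_iff.mpr hv0)
    have hwH : (w : K[X]).natDegree ∈ H := w.2 _ (mem_support_iff.mpr hw0)
    have hsum : (v : K[X]).natDegree + (w : K[X]).natDegree = a := by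
      rw [← natDegree_mul hvne hwne, hcoe, natDegree_X_pow]
    rcases eq_or_ne (v : K[X]).natDegree 0 with h0 | h0
    · left
      exact aux_isUnit_C' hv0 (by conv_lhs => rw [hveq, h0, pow_zero, mul_one])
    · right
      have hw0' : (w : K[X]).natDegree = 0 := by
        by_contra hw0'
        exact hatom _ hvH _ hwH h0 hw0' hsum.symm
      exact aux_isUnit_C' hw0 (by conv_lhs => rw [hweq, hw0', pow_zero, mul_one])

theorem aux_atom_of_irreducible {a : ℕ} (haH : a ∈ H)
    (h : Irreducible (mon K H a)) : IsAtomOfN H a := by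
  refine ⟨haH, ?_, ?_⟩
  · rintro rfl
    exact h.not_isUnit ((aux_isUnit_mon_iff haH).mpr rfl)
  · intro v hv w hw hv0 hw0 heq
    have : mon K H a = mon K H v * mon K H w := by rw [heq, mon_add hv hw]
    rcases h.isUnit_or_isUnit this with h1 | h1
    · exact hv0 ((aux_isUnit_mon_iff hv).mp h1)
    · exact hw0 ((aux_isUnit_mon_iff hw).mp h1)

theorem aux_irred_dvd {u : ↥(semigroupAlgebra K H)} (hu : Irreducible u) {n : ℕ}
    (hdvd : (u : K[X]) ∣ X ^ n) :
    ∃ a : ℕ, IsAtomOfN H a ∧ Associated u (mon K H a) := by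
  obtain ⟨q, hq⟩ := hdvd
  obtain ⟨hc0, hceq⟩ := aux_eq_C_mul_X_pow (u : K[X]) q n hq.symm
  set a := (u : K[X]).natDegree with ha
  set cu := (u : K[X]).leadingCoeff with hcu
  have haH : a ∈ H := u.2 _ (mem_support_iff.mpr hc0)
  have hueq : u = algebraMap K _ cu * mon K H a := by
    apply Subtype.ext
    push_cast
    rw [mon_coe haH]
    simpa [Polynomial.algebraMap_eq] using hceq
  have hunit : IsUnit (algebraMap K ↥(semigroupAlgebra K H) cu) :=
    (algebraMap K _).isUnit_map (isUnit_iff_ne_zero.mpr hc0)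
  have hassoc : Associated u (mon K H a) := by
    refine ⟨hunit.unit⁻¹, ?_⟩
    rw [hueq, mul_comm (algebraMap K _ cu), mul_assoc, IsUnit.mul_val_inv, mul_one]
  exact ⟨a, aux_atom_of_irreducible haH (hassoc.irreducible hu), hassoc⟩

theorem aux_map_prod {z : Multiset ℕ} (hz : ∀ x ∈ z, x ∈ H) :
    (z.map (mon K H)).prod = mon K H z.sum := by
  induction z using Multiset.induction with
  | empty =>
      simp only [Multiset.map_zero, Multiset.prod_zero, Multiset.sum_zero]
      exact (Subtype.ext (by rw [mon_coe H.zero_mem, pow_zero]; rfl)).symm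
  | cons b s ih =>
      have hb : b ∈ H := hz b (Multiset.mem_cons_self b s)
      have hs : ∀ x ∈ s, x ∈ H := fun x hx => hz x (Multiset.mem_cons_of_mem hx)
      have hsum : s.sum ∈ H := AddSubmonoid.multiset_sum_mem H s hs
      rw [Multiset.map_cons, Multiset.prod_cons, Multiset.sum_cons, mon_add hb hsum, ih hs]

theorem aux_map_injOn {α β : Type*} (f : α → β) (S : Set α) (hf : Set.InjOn f S) :
    ∀ s t : Multiset α, (∀ x ∈ s, x ∈ S) → (∀ x ∈ t, x ∈ S) → s.map f = t.map f → s = t := by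
  intro s
  induction s using Multiset.induction with
  | empty =>
      intro t _ _ h
      exact (Multiset.map_eq_zero.mp h.symm).symm
  | cons a s ih =>
      intro t hs ht h
      have hmem : f a ∈ t.map f := by
        rw [← h]; exact Multiset.mem_map_of_mem f (Multiset.mem_cons_self a s)
      obtain ⟨b, hb, hfb⟩ := Multiset.mem_map.mp hmem
      have hab : b = a := hf (ht b hb) (hs a (Multiset.mem_cons_self a s)) hfb
      subst hab
      obtain ⟨t', rfl⟩ := Multiset.exists_cons_of_mem hb
      rw [Multiset.map_cons, Multiset.map_cons] at h
      have h' : s.map f = t'.map f := by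
        exact (Multiset.cons_inj_right _).mp h
      rw [ih t' (fun x hx => hs x (Multiset.mem_cons_of_mem hx))
        (fun x hx => ht x (Multiset.mem_cons_of_mem hx)) h']

theorem aux_lift {α β : Type*} (e : α → β) (P : α → Prop) :
    ∀ w : Multiset β, (∀ x ∈ w, ∃ a, P a ∧ x = e a) →
      ∃ z : Multiset α, (∀ a ∈ z, P a) ∧ w = z.map e := by
  intro w
  induction w using Multiset.induction with
  | empty => exact fun _ => ⟨0, by simp⟩
  | cons x w ih =>
      intro hw
      obtain ⟨a, hPa, hx⟩ := hw x (Multiset.mem_cons_self x w)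
      obtain ⟨z, hz, hweq⟩ := ih (fun y hy => hw y (Multiset.mem_cons_of_mem hy))
      refine ⟨a ::ₘ z, ?_, ?_⟩
      · intro b hb
        rcases Multiset.mem_cons.mp hb with rfl | hb
        · exact hPa
        · exact hz b hb
      · rw [Multiset.map_cons, ← hweq, ← hx]

theorem aux_prod_mk {R : Type*} [CommMonoid R] (z : Multiset R) :
    (z.map Associates.mk).prod = Associates.mk z.prod := by
  rw [show (Associates.mk : R → Associates R) = ⇑Associates.mkMonoidHom from rfl]
  exact Multiset.prod_hom z Associates.mkMonoidHom

end Aux2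

theorem aux_bijOn {K : Type*} [Field K] {H : AddSubmonoid ℕ} (c : ℕ) (hc : c ∈ H)
    (g : semigroupAlgebra K H) (hg : (g : Polynomial K) = Polynomial.X ^ c) (k : ℕ) :
    Set.BijOn (fun z : Multiset ℕ => z.map (fun a => Associates.mk (mon K H a)))
      {z : Multiset ℕ | IsFactorizationOfN H c z ∧ Multiset.card z = k}
      (AlgFactorizationsOfLength g k) := by
  have hgmon : g = mon K H c := Subtype.ext (by rw [hg, mon_coe hc])
  set e : ℕ → Associates ↥(semigroupAlgebra K H) := fun a => Associates.mk (mon K H a) with he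
  have hFprod : ∀ z : Multiset ℕ, (∀ x ∈ z, x ∈ H) →
      (z.map e).prod = Associates.mk (mon K H z.sum) := by
    intro z hz
    have : z.map e = (z.map (mon K H)).map Associates.mk := by
      rw [Multiset.map_map]; rfl
    rw [this, aux_prod_mk, aux_map_prod hz]
  refine ⟨?_, ?_, ?_⟩
  · rintro z ⟨⟨hatoms, hsum⟩, hcard⟩
    refine ⟨?_, ?_, ?_⟩
    · intro x hx
      obtain ⟨a, ha, rfl⟩ := Multiset.mem_map.mp hx
      exact ⟨mon K H a, aux_irreducible_of_atom (hatoms a ha), rfl⟩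
    · rw [hFprod z (fun x hx => (hatoms x hx).1), hsum, hgmon]
    · rw [Multiset.card_map, hcard]
  · rintro z1 ⟨⟨h1, -⟩, -⟩ z2 ⟨⟨h2, -⟩, -⟩ hF
    refine aux_map_injOn e {a | a ∈ H} ?_ z1 z2 (fun x hx => (h1 x hx).1)
      (fun x hx => (h2 x hx).1) hF
    intro a haH b hbH hab
    exact aux_Xpow_assoc (by
      have := aux_assoc_coe (Associates.mk_eq_mk_iff_associated.mp hab)
      rwa [mon_coe haH, mon_coe hbH] at this)
  · rintro w ⟨hirr, hprod, hcard⟩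
    have hform : ∀ x ∈ w, ∃ a : ℕ, IsAtomOfN H a ∧ x = e a := by
      intro x hx
      obtain ⟨u, hu, rfl⟩ := hirr x hx
      have hdvdw : Associates.mk u ∣ w.prod := Multiset.dvd_prod hx
      rw [hprod] at hdvdw
      have hdvd : u ∣ g := Associates.mk_dvd_mk.mp hdvdw
      have hdvdX : (u : Polynomial K) ∣ Polynomial.X ^ c := by
        have := map_dvd (Subalgebra.val _) hdvd
        rwa [Subalgebra.coe_val, hg] at this
      obtain ⟨a, hatom, hassoc⟩ := aux_irred_dvd hu hdvdX
      exact ⟨a, hatom, Associates.mk_eq_mk_iff_associated.mpr hassoc⟩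
    obtain ⟨z, hz, hweq⟩ := aux_lift e (IsAtomOfN H) w hform
    have hzH : ∀ x ∈ z, x ∈ H := fun x hx => (hz x hx).1
    have hsum : z.sum = c := by
      have h1 : Associates.mk (mon K H z.sum) = Associates.mk (mon K H c) := by
        rw [← hFprod z hzH, ← hweq, hprod, hgmon]
      have h2 := aux_assoc_coe (Associates.mk_eq_mk_iff_associated.mp h1)
      rw [mon_coe (AddSubmonoid.multiset_sum_mem H z hzH), mon_coe hc] at h2
      exact aux_Xpow_assoc h2
    refine ⟨z, ⟨⟨hz, hsum⟩, ?_⟩, hweq.symm⟩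
    rw [← hcard, hweq, Multiset.card_map]

/-- Let `K` be a field, `H` a numerical monoid and `c ∈ H`. Then the set
of lengths of the monomial `X^c` in the semigroup algebra `K[H]` equals the set of
lengths of `c` in `H`, and for every `k` the number of factorizations of `X^c` in
`K[H]` of length `k` (up to associates) equals the number of factorizations of `c` in
`H` of length `k`. -/
theorem stmt13 (K : Type*) [Field K] (H : AddSubmonoid ℕ)
    (hH : ((H : Set ℕ)ᶜ).Finite) (c : ℕ) (hc : c ∈ H)
    (g : semigroupAlgebra K H) (hg : (g : Polynomial K) = Polynomial.X ^ c) :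
    ({k | (AlgFactorizationsOfLength g k).Nonempty}
        = {k | ∃ z : Multiset ℕ, IsFactorizationOfN H c z ∧ Multiset.card z = k}) ∧
    ∀ k : ℕ, (AlgFactorizationsOfLength g k).ncard
        = {z : Multiset ℕ | IsFactorizationOfN H c z ∧ Multiset.card z = k}.ncard := by
  have bij := fun k => aux_bijOn c hc g hg (K := K) k
  constructor
  · ext k
    simp only [Set.mem_setOf_eq]
    constructor
    · rintro ⟨w, hw⟩
      obtain ⟨z, hz, -⟩ := (bij k).surjOn hw
      exact ⟨z, hz⟩
    · rintro ⟨z, hz1, hz2⟩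
      exact ⟨_, (bij k).mapsTo ⟨hz1, hz2⟩⟩
  · intro k
    rw [← (bij k).image_eq, Set.ncard_image_of_injOn (bij k).injOn]
end
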